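/- arXiv:2302.05883 — 8 statements merged into one kernel-verified Lean document; each statement's English description precedes it below -/
import Mathlib

section
/- Let n ≥ 2 and let x_1,…,x_n be points on the unit circle in ℂ forming a single cluster, i.e. δ ≤ |x_i − x_j| ≤ τδ for all i ≠ j, with 0 < δ < 1 and τ > 1, and let amplitudes α_1,…,α_n ∈ ℂ satisfy 𝔪 ≤ |α_j| ≤ 𝔐 for some 0 < 𝔪 ≤ 𝔐. Then for every K > 0 there exist constants c > 0 and C > 0 depending only on n, τ, 𝔪, 𝔐, K such that: if 0 < ε ≤ c δ^{3n−3}, if x̃_1,…,x̃_n ∈ ℂ are pairwise distinct with |x̃_j − x_j| ≤ K δ^{2−2n} ε for every j, and if m̃_0,…,m̃_{n−1} ∈ ℂ satisfy |m̃_i − m_i| ≤ ε for every i, then the Vandermonde matrix Ṽ with entries Ṽ_{k,j} = x̃_j^k (0 ≤ k ≤ n−1) is invertible and the unique solution α̃ = (α̃_1,…,α̃_n) of Ṽ α̃ = (m̃_0,…,m̃_{n−1})ᵀ satisfies |α̃_j − α_j| ≤ C δ^{3−3n} ε for every j. -/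
open Matrix

open Polynomial Finset in
private lemma coeff_prod_X_sub_C_bound' {ι : Type*} [DecidableEq ι] (B : ℝ) (hB : 0 ≤ B)
    (v : ι → ℂ) :
    ∀ (s : Finset ι), (∀ i ∈ s, ‖v i‖ ≤ B) → ∀ k,
      ‖(∏ i ∈ s, (X - C (v i))).coeff k‖ ≤ (1 + B) ^ s.card := by
  intro s
  induction s using Finset.induction_on with
  | empty =>
    intro _ k
    simp only [prod_empty, Polynomial.coeff_one, card_empty, pow_zero]
    split <;> simp
  | insert a s ha ih =>
    intro hv k
    have hva : ‖v a‖ ≤ B := hv a (mem_insert_self a s)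
    have ih' := ih (fun i hi => hv i (mem_insert_of_mem hi))
    rw [prod_insert ha, card_insert_of_notMem ha]
    have hexp : ((X - C (v a)) * ∏ i ∈ s, (X - C (v i))).coeff k
        = (X * ∏ i ∈ s, (X - C (v i))).coeff k - v a * (∏ i ∈ s, (X - C (v i))).coeff k := by
      rw [sub_mul, coeff_sub, coeff_C_mul]
    rw [hexp]
    set p := ∏ i ∈ s, (X - C (v i))
    have h1 : (0:ℝ) ≤ (1+B) ^ s.card := by positivity
    cases k with
    | zero =>
      have hz : (X * p).coeff 0 = 0 := by simp [Polynomial.mul_coeff_zero]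
      rw [hz, zero_sub, norm_neg, norm_mul]
      calc ‖v a‖ * ‖p.coeff 0‖
          ≤ B * (1+B) ^ s.card :=
            mul_le_mul hva (ih' 0) (norm_nonneg _) hB
        _ ≤ (1+B) ^ (s.card + 1) := by
            rw [pow_succ]; nlinarith [h1]
    | succ k =>
      rw [Polynomial.coeff_X_mul]
      calc ‖p.coeff k - v a * p.coeff (k+1)‖
          ≤ ‖p.coeff k‖ + ‖v a * p.coeff (k+1)‖ :=
            norm_sub_le _ _
        _ = ‖p.coeff k‖ + ‖v a‖ * ‖p.coeff (k+1)‖ := by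
            rw [norm_mul]
        _ ≤ (1+B)^s.card + B * (1+B)^s.card :=
            add_le_add (ih' k) (mul_le_mul hva (ih' (k+1)) (norm_nonneg _) hB)
        _ = (1+B) ^ (s.card + 1) := by ring

open Polynomial Finset in
private lemma coeff_lagrange_basis_bound' {ι : Type*} [DecidableEq ι] (s : Finset ι) (v : ι → ℂ)
    (i : ι) (B d : ℝ) (hB : 0 ≤ B) (hd : 0 < d)
    (hv : ∀ j ∈ s, ‖v j‖ ≤ B)
    (hsep : ∀ j ∈ s.erase i, d ≤ ‖v i - v j‖) (k : ℕ) :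
    ‖(Lagrange.basis s v i).coeff k‖ ≤ ((1 + B) / d) ^ (s.erase i).card := by
  have hbasis : Lagrange.basis s v i
      = C (∏ j ∈ s.erase i, (v i - v j)⁻¹) * ∏ j ∈ s.erase i, (X - C (v j)) := by
    unfold Lagrange.basis Lagrange.basisDivisor
    rw [prod_mul_distrib, map_prod]
  rw [hbasis, coeff_C_mul, norm_mul, norm_prod]
  have h1 : ∏ j ∈ s.erase i, ‖(v i - v j)⁻¹‖ ≤ (1/d) ^ (s.erase i).card := by
    rw [← prod_const]
    refine prod_le_prod (fun j _ => norm_nonneg _) fun j hj => ?_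
    rw [norm_inv, one_div]
    exact inv_anti₀ hd (hsep j hj)
  have h2 : ‖(∏ j ∈ s.erase i, (X - C (v j))).coeff k‖ ≤ (1+B) ^ (s.erase i).card :=
    coeff_prod_X_sub_C_bound' B hB v _ (fun j hj => hv j (mem_of_mem_erase hj)) k
  have h3 : (∏ j ∈ s.erase i, ‖(v i - v j)⁻¹‖)
        * ‖(∏ j ∈ s.erase i, (X - C (v j))).coeff k‖
      ≤ (1/d) ^ (s.erase i).card * (1+B) ^ (s.erase i).card :=
    mul_le_mul h1 h2 (norm_nonneg _) (pow_nonneg (by positivity) _)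
  refine h3.trans (le_of_eq ?_)
  rw [← mul_pow]
  congr 1
  field_simp

private lemma abs_pow_sub_pow_le' (a b : ℂ) (M : ℝ) (hM : 1 ≤ M)
    (ha : ‖a‖ ≤ M) (hb : ‖b‖ ≤ M) (k n : ℕ) (hk : k ≤ n) :
    ‖a ^ k - b ^ k‖ ≤ n * M ^ n * ‖a - b‖ := by
  have hM0 : 0 ≤ M := le_trans zero_le_one hM
  rw [← geom_sum₂_mul a b k, norm_mul]
  have hsum : ‖∑ i ∈ Finset.range k, a ^ i * b ^ (k - 1 - i)‖ ≤ n * M ^ n := by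
    calc ‖∑ i ∈ Finset.range k, a ^ i * b ^ (k - 1 - i)‖
        ≤ ∑ i ∈ Finset.range k, ‖a ^ i * b ^ (k - 1 - i)‖ :=
          norm_sum_le _ _
      _ ≤ ∑ _i ∈ Finset.range k, M ^ n := by
          refine Finset.sum_le_sum fun i hi => ?_
          rw [norm_mul, norm_pow, norm_pow]
          calc ‖a‖ ^ i * ‖b‖ ^ (k-1-i)
              ≤ M ^ i * M ^ (k-1-i) :=
                mul_le_mul (pow_le_pow_left₀ (norm_nonneg _) ha i)
                  (pow_le_pow_left₀ (norm_nonneg _) hb _)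
                  (pow_nonneg (norm_nonneg _) _) (pow_nonneg hM0 _)
            _ = M ^ (i + (k-1-i)) := by rw [pow_add]
            _ ≤ M ^ n := by
                apply pow_le_pow_right₀ hM
                have := Finset.mem_range.mp hi
                omega
      _ = k * M ^ n := by rw [Finset.sum_const, Finset.card_range, nsmul_eq_mul]
      _ ≤ n * M ^ n := by
          have h : (k:ℝ) ≤ n := Nat.cast_le.mpr hk
          have := pow_nonneg hM0 n
          nlinarith
  exact mul_le_mul_of_nonneg_right hsum (norm_nonneg _)


/-- Naive accuracy of amplitude recovery for a single cluster:
given approximate pairwise-distinct nodes `x̃_j` with `|x̃_j - x_j| ≤ K δ^{2-2n} ε` and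
approximate first moments `m̃_i` with `|m̃_i - m_i| ≤ ε`, where `ε ≤ c δ^{3n-3}`, the
Vandermonde matrix at the approximate nodes is invertible and the solution `α̃` of
`Ṽ α̃ = m̃` satisfies `|α̃_j - α_j| ≤ C₁ δ^{3-3n} ε`. -/
theorem prony_naive_amplitude_accuracy
    (n : ℕ) (hn : 2 ≤ n) (τ mA MA : ℝ) (hτ : 1 < τ) (hmA : 0 < mA) (hMA : mA ≤ MA)
    (K : ℝ) (hK : 0 < K) :
    ∃ c C₁ : ℝ, 0 < c ∧ 0 < C₁ ∧
      ∀ (δ : ℝ) (x α : Fin n → ℂ),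
        0 < δ → δ < 1 →
        (∀ j, ‖x j‖ = 1) →
        (∀ i j, i ≠ j →
          δ ≤ ‖x i - x j‖ ∧ ‖x i - x j‖ ≤ τ * δ) →
        (∀ j, mA ≤ ‖α j‖ ∧ ‖α j‖ ≤ MA) →
        ∀ (ε : ℝ) (xt : Fin n → ℂ) (mt : Fin n → ℂ),
          0 < ε → ε ≤ c * δ ^ (3 * n - 3) →
          Function.Injective xt →
          (∀ j, ‖xt j - x j‖ ≤ K * δ ^ (2 - 2 * (n : ℤ)) * ε) →
          (∀ i : Fin n,
            ‖mt i - ∑ j, α j * x j ^ (i : ℕ)‖ ≤ ε) →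
          IsUnit (Matrix.of fun k j : Fin n => xt j ^ (k : ℕ)).det ∧
          ∀ at' : Fin n → ℂ,
            (Matrix.of fun k j : Fin n => xt j ^ (k : ℕ)) *ᵥ at' = mt →
            ∀ j : Fin n,
              ‖at' j - α j‖ ≤ C₁ * δ ^ (3 - 3 * (n : ℤ)) * ε := by
    classical
  have hMA0 : 0 < MA := lt_of_lt_of_le hmA hMA
  refine ⟨1/(4*K), (n:ℝ) * 6^(n-1) * (1 + (n:ℝ)^2 * MA * 2^n * K),
    by positivity, by positivity, ?_⟩
  intro δ x α hδ0 hδ1 hxunit hsep hα ε xt mt hε0 hεc hinj hxt hmt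
  have hδne : δ ≠ 0 := ne_of_gt hδ0
  set P : ℝ := K * δ ^ (2 - 2 * (n : ℤ)) * ε with hPdef
  -- P ≤ δ/4
  have hPle : P ≤ δ/4 := by
    have h2 : P ≤ K * δ ^ (2 - 2 * (n : ℤ)) * (1/(4*K) * δ ^ (3*n-3)) := by
      exact mul_le_mul_of_nonneg_left hεc (by positivity)
    have h3 : δ ^ (2 - 2 * (n : ℤ)) * δ ^ (3*n-3 : ℕ) = δ ^ ((n:ℤ)-1) := by
      rw [← zpow_natCast δ (3*n-3), ← zpow_add₀ hδne]
      congr 1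
      omega
    have h4 : δ ^ ((n:ℤ)-1) ≤ δ := by
      have he : ((n:ℤ)-1) = ((n-1 : ℕ) : ℤ) := by omega
      rw [he, zpow_natCast]
      calc δ^(n-1) ≤ δ^1 := pow_le_pow_of_le_one hδ0.le hδ1.le (by omega)
        _ = δ := pow_one δ
    have h5 : K * δ ^ (2 - 2 * (n : ℤ)) * (1/(4*K) * δ ^ (3*n-3))
        = (1/4) * (δ ^ (2 - 2 * (n : ℤ)) * δ ^ (3*n-3 : ℕ)) := by
      field_simp
    rw [h5, h3] at h2
    linarith
  have hP0 : 0 < P := by positivity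
  -- nodes stay bounded and separated
  have hxtb : ∀ j, ‖xt j‖ ≤ 2 := by
    intro j
    have h : ‖xt j‖ ≤ ‖x j‖ + ‖xt j - x j‖ := by
      simpa using norm_add_le (x j) (xt j - x j)
    have := hxt j
    rw [hxunit j] at h
    have : ‖xt j - x j‖ ≤ δ/4 := le_trans (hxt j) hPle
    linarith
  have hsep' : ∀ i j : Fin n, i ≠ j → δ/2 ≤ ‖xt i - xt j‖ := by
    intro i j hij
    have h1 := (hsep i j hij).1
    have h2 : ‖xt i - x i‖ ≤ δ/4 := le_trans (hxt i) hPle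
    have h3 : ‖xt j - x j‖ ≤ δ/4 := le_trans (hxt j) hPle
    have e : x i - x j = (xt i - xt j) + ((x i - xt i) + (xt j - x j)) := by ring
    have key : ‖x i - x j‖
        ≤ ‖xt i - xt j‖ + (‖x i - xt i‖ + ‖xt j - x j‖) := by
      rw [e]
      exact le_trans (norm_add_le _ _)
        (by exact add_le_add le_rfl (norm_add_le _ _))
    rw [norm_sub_rev (x i) (xt i)] at key
    linarith
  -- the Lagrange left inverse
  set V : Matrix (Fin n) (Fin n) ℂ := Matrix.of fun k j : Fin n => xt j ^ (k:ℕ) with hVdef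
  set L : Fin n → Polynomial ℂ := fun j => Lagrange.basis Finset.univ xt j with hLdef
  have hinjOn : Set.InjOn xt (Finset.univ : Finset (Fin n)) := fun a _ b _ h => hinj h
  have hdeg : ∀ j, (L j).natDegree < n := by
    intro j
    rw [hLdef]
    simp only
    rw [Lagrange.natDegree_basis hinjOn (Finset.mem_univ j), Finset.card_univ, Fintype.card_fin]
    omega
  set W : Matrix (Fin n) (Fin n) ℂ := Matrix.of fun j k : Fin n => (L j).coeff k with hWdef
  have hWV : W * V = 1 := by
    ext j j'
    rw [Matrix.mul_apply]
    have hsum : ∑ k : Fin n, W j k * V k j'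
        = ∑ k ∈ Finset.range n, (L j).coeff k * xt j' ^ k := by
      rw [← Fin.sum_univ_eq_sum_range (fun k : ℕ => (L j).coeff k * xt j' ^ k) n]
      rfl
    rw [hsum, ← Polynomial.eval_eq_sum_range' (hdeg j)]
    by_cases h : j = j'
    · subst h
      rw [Matrix.one_apply_eq]
      exact Lagrange.eval_basis_self hinjOn (Finset.mem_univ j)
    · rw [Matrix.one_apply_ne h]
      exact Lagrange.eval_basis_of_ne h (Finset.mem_univ j')
  refine ⟨Matrix.isUnit_det_of_left_inverse hWV, ?_⟩
  intro at' hat j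
  have hat' : at' = W *ᵥ mt := by
    calc at' = (1 : Matrix (Fin n) (Fin n) ℂ) *ᵥ at' := (Matrix.one_mulVec at').symm
      _ = (W * V) *ᵥ at' := by rw [hWV]
      _ = W *ᵥ (V *ᵥ at') := (Matrix.mulVec_mulVec at' W V).symm
      _ = W *ᵥ mt := by rw [hat]
  have hα' : α = W *ᵥ (V *ᵥ α) := by
    rw [Matrix.mulVec_mulVec, hWV, Matrix.one_mulVec]
  have hdiff : at' j - α j = ∑ k : Fin n, W j k * (mt k - (V *ᵥ α) k) := by
    have h1 : at' j = ∑ k : Fin n, W j k * mt k := by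
      rw [hat']; rfl
    have h2 : α j = ∑ k : Fin n, W j k * (V *ᵥ α) k := by
      conv_lhs => rw [hα']
      rfl
    rw [h1, h2, ← Finset.sum_sub_distrib]
    exact Finset.sum_congr rfl fun k _ => (mul_sub _ _ _).symm
  -- bound on residual entries
  have hslack : (1:ℝ) ≤ δ ^ (2 - 2 * (n : ℤ)) := by
    have hzp : δ ^ (2 - 2 * (n : ℤ)) = (δ ^ (2*n-2 : ℕ))⁻¹ := by
      rw [← zpow_natCast δ (2*n-2), ← _root_.zpow_neg]
      congr 1
      omega
    rw [hzp]
    exact (one_le_inv₀ (pow_pos hδ0 _)).mpr (pow_le_one₀ hδ0.le hδ1.le)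
  have hR : ∀ k : Fin n, ‖mt k - (V *ᵥ α) k‖
      ≤ (1 + (n:ℝ)^2 * MA * 2^n * K) * δ ^ (2 - 2 * (n : ℤ)) * ε := by
    intro k
    have hVk : (V *ᵥ α) k = ∑ j, xt j ^ (k:ℕ) * α j := rfl
    have htri : ‖mt k - (V *ᵥ α) k‖
        ≤ ‖mt k - ∑ j, α j * x j ^ (k:ℕ)‖
          + ‖(∑ j, α j * x j ^ (k:ℕ)) - (V *ᵥ α) k‖ := by
      have e : mt k - (V *ᵥ α) k
          = (mt k - ∑ j, α j * x j ^ (k:ℕ)) + ((∑ j, α j * x j ^ (k:ℕ)) - (V *ᵥ α) k) := by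
        ring
      rw [e]
      exact norm_add_le _ _
    have hsum2 : ‖(∑ j, α j * x j ^ (k:ℕ)) - (V *ᵥ α) k‖
        ≤ (n:ℝ) * (MA * ((n:ℝ) * 2^n * P)) := by
      rw [hVk]
      have e : (∑ j, α j * x j ^ (k:ℕ)) - ∑ j, xt j ^ (k:ℕ) * α j
          = ∑ j, α j * (x j ^ (k:ℕ) - xt j ^ (k:ℕ)) := by
        rw [← Finset.sum_sub_distrib]
        exact Finset.sum_congr rfl fun j _ => by ring
      rw [e]
      calc ‖∑ j, α j * (x j ^ (k:ℕ) - xt j ^ (k:ℕ))‖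
          ≤ ∑ j, ‖α j * (x j ^ (k:ℕ) - xt j ^ (k:ℕ))‖ := norm_sum_le _ _
        _ ≤ ∑ _j : Fin n, MA * ((n:ℝ) * 2^n * P) := by
            refine Finset.sum_le_sum fun j _ => ?_
            rw [norm_mul]
            have hterm : ‖x j ^ (k:ℕ) - xt j ^ (k:ℕ)‖ ≤ (n:ℝ) * 2^n * P := by
              have h := abs_pow_sub_pow_le' (x j) (xt j) 2 one_le_two
                (by rw [hxunit j]; norm_num) (hxtb j) (k:ℕ) n (le_of_lt k.isLt)
              refine h.trans ?_
              have : ‖x j - xt j‖ ≤ P := by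
                rw [norm_sub_rev]
                exact hxt j
              exact mul_le_mul_of_nonneg_left this (by positivity)
            exact mul_le_mul (hα j).2 hterm (norm_nonneg _) hMA0.le
        _ = (n:ℝ) * (MA * ((n:ℝ) * 2^n * P)) := by
            rw [Finset.sum_const, Finset.card_univ, Fintype.card_fin, nsmul_eq_mul]
    have hεslack : ε ≤ δ ^ (2 - 2 * (n : ℤ)) * ε :=
      le_mul_of_one_le_left hε0.le hslack
    have hPexp : (n:ℝ) * (MA * ((n:ℝ) * 2^n * P))
        = (n:ℝ)^2 * MA * 2^n * K * (δ ^ (2 - 2 * (n : ℤ)) * ε) := by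
      rw [hPdef]; ring
    have := hmt k
    have hfinal : (1 + (n:ℝ)^2 * MA * 2^n * K) * δ ^ (2 - 2 * (n : ℤ)) * ε
        = δ ^ (2 - 2 * (n : ℤ)) * ε + (n:ℝ)^2 * MA * 2^n * K * (δ ^ (2 - 2 * (n : ℤ)) * ε) := by
      ring
    rw [hfinal]
    linarith [htri, hsum2, hPexp]
  -- bound on the inverse entries
  have hWb : ∀ j k : Fin n, ‖W j k‖ ≤ 6^(n-1) * δ ^ ((1:ℤ) - n) := by
    intro j k
    have hs : ∀ j' ∈ (Finset.univ : Finset (Fin n)).erase j,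
        δ/2 ≤ ‖xt j - xt j'‖ := by
      intro j' hj'
      exact hsep' j j' (Finset.ne_of_mem_erase hj').symm
    have h := coeff_lagrange_basis_bound' Finset.univ xt j 2 (δ/2) (by norm_num)
      (by linarith) (fun j' _ => hxtb j') hs (k:ℕ)
    have hcard : ((Finset.univ : Finset (Fin n)).erase j).card = n - 1 := by
      rw [Finset.card_erase_of_mem (Finset.mem_univ j), Finset.card_univ, Fintype.card_fin]
    rw [hcard] at h
    have hWjk : W j k = (L j).coeff (k:ℕ) := rfl
    rw [hWjk]
    refine h.trans (le_of_eq ?_)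
    have e1 : ((1:ℝ)+2)/(δ/2) = 6/δ := by
      field_simp
      ring
    rw [e1, div_pow, div_eq_mul_inv, ← zpow_natCast δ (n-1), ← _root_.zpow_neg]
    congr 1
    congr 1
    omega
  -- final assembly
  calc ‖at' j - α j‖
      = ‖∑ k : Fin n, W j k * (mt k - (V *ᵥ α) k)‖ := by rw [hdiff]
    _ ≤ ∑ k : Fin n, ‖W j k * (mt k - (V *ᵥ α) k)‖ := norm_sum_le _ _
    _ ≤ ∑ _k : Fin n, (6^(n-1) * δ ^ ((1:ℤ) - n))
          * ((1 + (n:ℝ)^2 * MA * 2^n * K) * δ ^ (2 - 2 * (n : ℤ)) * ε) := by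
        refine Finset.sum_le_sum fun k _ => ?_
        rw [norm_mul]
        exact mul_le_mul (hWb j k) (hR k) (norm_nonneg _) (by positivity)
    _ = (n:ℝ) * ((6^(n-1) * δ ^ ((1:ℤ) - n))
          * ((1 + (n:ℝ)^2 * MA * 2^n * K) * δ ^ (2 - 2 * (n : ℤ)) * ε)) := by
        rw [Finset.sum_const, Finset.card_univ, Fintype.card_fin, nsmul_eq_mul]
    _ = ((n:ℝ) * 6^(n-1) * (1 + (n:ℝ)^2 * MA * 2^n * K)) * δ ^ (3 - 3 * (n : ℤ)) * ε := by
        rw [show (3 - 3 * (n : ℤ)) = ((1:ℤ) - n) + (2 - 2 * (n : ℤ)) by ring, zpow_add₀ hδne]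
        ring
end

section
/- Let n ≥ 1, let x_1,…,x_n ∈ ℂ and α_1,…,α_n ∈ ℂ, and set m_k = ∑_{j=1}^n α_j x_j^k. Then for every z ∈ ℂ, the homogeneous Prony polynomial p̄(z) satisfies p̄(z) = (−1)^n · (∏_{k=1}^n α_k) · (∏_{1 ≤ m < ℓ ≤ n} (x_ℓ − x_m)²) · (∏_{m=1}^n (z − x_m)). -/
open Matrix Finset

theorem pairprod {n : ℕ} (f : Fin n → Fin n → ℂ) :
    (∏ p ∈ Finset.univ.filter (fun p : Fin n × Fin n => p.1 < p.2), f p.1 p.2)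
      = ∏ i, ∏ j ∈ Finset.Ioi i, f i j := by
  rw [Finset.prod_filter, ← Finset.univ_product_univ, Finset.prod_product]
  refine Finset.prod_congr rfl fun i _ => ?_
  rw [← Finset.filter_lt_eq_Ioi, Finset.prod_filter]

/-- Explicit formula for the homogeneous Prony polynomial:
`p̄(z) = (-1)^n (∏_k α_k) (∏_{m<ℓ} (x_ℓ - x_m)²) (∏_m (z - x_m))`. -/
theorem homogeneous_prony_polynomial_formula
    (n : ℕ) (hn : 1 ≤ n) (x α : Fin n → ℂ) (z : ℂ) :
    (Matrix.det (Matrix.of fun i k : Fin (n + 1) =>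
        if (i : ℕ) = 0 then z ^ (k : ℕ)
        else ∑ j, α j * x j ^ ((i : ℕ) - 1 + (k : ℕ)))) =
      (-1) ^ n * (∏ k, α k) *
        (∏ p ∈ Finset.univ.filter (fun p : Fin n × Fin n => p.1 < p.2),
          (x p.2 - x p.1) ^ 2) *
        ∏ m, (z - x m) := by
  set v : Fin (n + 1) → ℂ := Fin.cons z x with hv
  set A : Matrix (Fin (n+1)) (Fin (n+1)) ℂ := Matrix.of fun i j =>
    Fin.cases (Fin.cases (1:ℂ) (fun _ => 0) j)
      (fun i' => Fin.cases (0:ℂ) (fun j' => α j' * x j' ^ (i':ℕ)) j) i with hA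
  have hM : (Matrix.of fun i k : Fin (n + 1) =>
        if (i : ℕ) = 0 then z ^ (k : ℕ)
        else ∑ j, α j * x j ^ ((i : ℕ) - 1 + (k : ℕ))) = A * Matrix.vandermonde v := by
    ext i k
    rw [Matrix.mul_apply]
    refine Fin.cases ?_ (fun i' => ?_) i
    · simp [hA, hv, Fin.sum_univ_succ, Matrix.vandermonde]
    · have : ((i'.succ : ℕ) : ℕ) ≠ 0 := by simp
      simp [hA, hv, Fin.sum_univ_succ, Matrix.vandermonde, this, pow_add, mul_assoc,
        ← pow_add]
  rw [hM, Matrix.det_mul]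
  -- det A
  have hdetA : A.det = (∏ k, α k) * (Matrix.vandermonde x).det := by
    rw [Matrix.det_succ_row_zero]
    have h0 : ∀ j : Fin (n+1), A 0 j = Fin.cases (1:ℂ) (fun _ => 0) j := fun j => rfl
    rw [Fin.sum_univ_succ]
    simp only [h0, Fin.cases_zero, Fin.cases_succ, mul_zero, zero_mul, Finset.sum_const_zero,
      add_zero, Fin.val_zero, pow_zero, one_mul]
    have : (A.submatrix Fin.succ (Fin.succAbove 0)) = Matrix.of fun i j : Fin n =>
        α j * x j ^ (i : ℕ) := by
      ext i j
      simp [hA, Fin.succAbove]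
    rw [this, ← Matrix.det_transpose]
    have htr : (Matrix.of fun i j : Fin n => α j * x j ^ (i:ℕ))ᵀ =
        Matrix.of fun i j : Fin n => α i * Matrix.vandermonde x i j := by
      ext i j; simp [Matrix.vandermonde, Matrix.transpose_apply]
    rw [htr, Matrix.det_mul_column]
  rw [hdetA, Matrix.det_vandermonde, Matrix.det_vandermonde, pairprod (fun i j => (x j - x i)^2)]
  rw [hv, Fin.prod_univ_succ]
  simp only [Fin.prod_Ioi_zero, Fin.prod_Ioi_succ, Fin.cons_succ, Fin.cons_zero]
  have hneg : (∏ j : Fin n, (x j - z)) = (-1)^n * ∏ m, (z - x m) := by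
    have h1 : (∏ j : Fin n, (x j - z)) = ∏ j : Fin n, (-1) * (z - x j) :=
      Finset.prod_congr rfl (by intros; ring)
    rw [h1, Finset.prod_mul_distrib, Finset.prod_const, Finset.card_univ, Fintype.card_fin]
  rw [hneg]
  have hsq : (∏ i, ∏ j ∈ Finset.Ioi i, (x j - x i) ^ 2)
      = (∏ i, ∏ j ∈ Finset.Ioi i, (x j - x i)) * ∏ i, ∏ j ∈ Finset.Ioi i, (x j - x i) := by
    simp [pow_two, Finset.prod_mul_distrib]
  rw [hsq]
  ring
end

section
/- Let n ≥ 2 and 1 ≤ κ ≤ n−1 be integers, let a, b ≥ 0 be integers, let 0 < k_1 < k_2 < … < k_{n−κ} and 0 < l_1 < … < l_{n−κ−1} be integers, and work in the multivariate polynomial ring R = ℂ[Z, X_1,…,X_n, A_1,…,A_n]. For each integer s ≥ 0 set M_s = ∑_{j=1}^n A_j X_j^s ∈ R, and let Γ ∈ R be the determinant of the (n−κ+1)×(n−κ+1) matrix whose first row is (Z^a, Z^{a+k_1}, …, Z^{a+k_{n−κ}}) and whose remaining rows, indexed by l ∈ {0, l_1, …, l_{n−κ−1}}, are (M_{b+l},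 M_{b+l+k_1}, …, M_{b+l+k_{n−κ}}). Then there exist polynomials φ_ω ∈ R, one for each strictly increasing tuple ω = (ω_1 < ω_2 < … < ω_{n−κ}) of indices from {1,…,n}, such that Γ = ∑_ω (∏_{s=1}^{n−κ} (X_{ω_s} − Z)) · (∏_{1 ≤ s < t ≤ n−κ} (X_{ω_t} − X_{ω_s})²) · φ_ω (with the convention that the empty product over s < t equals 1 when n−κ = 1). -/
open Matrix MvPolynomial

section GammaAuxSection
open Finset

namespace GammaAux

variable {τ : Type*} [DecidableEq τ]

noncomputable def subst (u v : τ) : MvPolynomial τ ℂ →+* MvPolynomial τ ℂ :=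
  (aeval (fun w => if w = u then X v else X w)).toRingHom

lemma subst_X (u v w : τ) : subst u v (X w) = if w = u then X v else X w := by
  simp [subst]

lemma subst_key (u v : τ) (p : MvPolynomial τ ℂ) :
    (X u - X v) ∣ (p - subst u v p) := by
  induction p using MvPolynomial.induction_on with
  | C a => simp [subst]
  | add p q hp hq =>
      rw [map_add]
      have h : p + q - (subst u v p + subst u v q)
          = (p - subst u v p) + (q - subst u v q) := by ring
      rw [h]; exact dvd_add hp hq
  | mul_X p w hp =>
      rw [_root_.map_mul, subst_X]
      by_cases hw : w = u
      · subst hw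
        rw [if_pos rfl]
        have h : p * X w - subst w v p * X v
            = (p - subst w v p) * X w + subst w v p * (X w - X v) := by ring
        rw [h]
        exact dvd_add (hp.mul_right _) (dvd_mul_left _ _)
      · rw [if_neg hw]
        have h : p * X w - subst u v p * X w = (p - subst u v p) * X w := by ring
        rw [h]; exact hp.mul_right _

lemma dvd_of_subst_eq_zero {u v : τ} {p : MvPolynomial τ ℂ}
    (h : subst u v p = 0) : (X u - X v) ∣ p := by
  have := subst_key u v p
  rwa [h, sub_zero] at this

lemma subst_eq_zero_of_dvd {u v : τ} {p : MvPolynomial τ ℂ}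
    (h : (X u - X v) ∣ p) : subst u v p = 0 := by
  obtain ⟨c, rfl⟩ := h
  rw [_root_.map_mul, map_sub, subst_X, subst_X, if_pos rfl, ite_self, sub_self, zero_mul]

lemma prime_X_sub_X {u v : τ} (huv : u ≠ v) :
    Prime (X u - X v : MvPolynomial τ ℂ) := by
  let e : τ ≃ Option {w : τ // w ≠ u} := (Equiv.optionSubtypeNe u).symm
  let F : MvPolynomial τ ℂ ≃+* Polynomial (MvPolynomial {w : τ // w ≠ u} ℂ) :=
    (renameEquiv ℂ e).toRingEquiv.trans (optionEquivLeft ℂ _).toRingEquiv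
  rw [← MulEquiv.prime_iff F.toMulEquiv]
  have hFu : F (X u) = Polynomial.X := by
    simp only [F, RingEquiv.coe_trans, Function.comp_apply, AlgEquiv.toRingEquiv_eq_coe,
      AlgEquiv.coe_ringEquiv, renameEquiv_apply, rename_X]
    have : e u = none := Equiv.optionSubtypeNe_symm_self u
    rw [this, optionEquivLeft_X_none]
  have hFv : F (X v) = Polynomial.C (X ⟨v, Ne.symm huv⟩) := by
    simp only [F, RingEquiv.coe_trans, Function.comp_apply, AlgEquiv.toRingEquiv_eq_coe,
      AlgEquiv.coe_ringEquiv, renameEquiv_apply, rename_X]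
    have : e v = some ⟨v, Ne.symm huv⟩ := Equiv.optionSubtypeNe_symm_of_ne (Ne.symm huv)
    rw [this, optionEquivLeft_X_some]
  have : F.toMulEquiv (X u - X v) = Polynomial.X - Polynomial.C (X ⟨v, Ne.symm huv⟩) := by
    show F (X u - X v) = _
    rw [map_sub, hFu, hFv]
  rw [this]
  exact Polynomial.prime_X_sub_C _

lemma prod_primes_dvd' {R : Type*} [CommMonoidWithZero R] {ι : Type*} [DecidableEq ι]
    (s : Finset ι) (p : ι → R) (N : R)
    (hp : ∀ i ∈ s, Prime (p i))
    (hnd : ∀ i ∈ s, ∀ j ∈ s, i ≠ j → ¬ p i ∣ p j)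
    (hd : ∀ i ∈ s, p i ∣ N) : (∏ i ∈ s, p i) ∣ N := by
  induction s using Finset.induction_on generalizing N with
  | empty => simpa using one_dvd N
  | insert c s' ha ih =>
      obtain ⟨N', rfl⟩ := hd c (mem_insert_self c s')
      rw [Finset.prod_insert ha]
      refine mul_dvd_mul_left _ (ih N' (fun i hi => hp i (mem_insert_of_mem hi))
        (fun i hi j hj hij => hnd i (mem_insert_of_mem hi) j (mem_insert_of_mem hj) hij)
        (fun i hi => ?_))
      have hdvd : p i ∣ p c * N' := hd i (mem_insert_of_mem hi)
      rcases (hp i (mem_insert_of_mem hi)).2.2 _ _ hdvd with h | h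
      · exact absurd h (hnd i (mem_insert_of_mem hi) c (mem_insert_self c s')
          (fun hic => ha (hic ▸ hi)))
      · exact h


lemma vandermonde_dvd {N : ℕ} (y : Fin N → τ) (hy : Function.Injective y) (e : Fin N → ℕ) :
    (∏ p ∈ Finset.univ.filter (fun p : Fin N × Fin N => p.1 < p.2),
        (X (y p.2) - X (y p.1))) ∣
      Matrix.det (Matrix.of fun i j => (X (y i) : MvPolynomial τ ℂ) ^ e j) := by
  have hXne : ∀ a b : Fin N, a ≠ b →
      (X (y a) : MvPolynomial τ ℂ) - X (y b) ≠ 0 := fun a b hab h =>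
    hab (hy (MvPolynomial.X_injective (sub_eq_zero.mp h)))
  refine prod_primes_dvd' _ _ _ ?_ ?_ ?_
  · rintro ⟨s, t⟩ hst
    simp only [mem_filter] at hst
    exact prime_X_sub_X (fun h => (ne_of_gt hst.2) (hy h))
  · rintro ⟨s, t⟩ hst ⟨s', t'⟩ hst' hne hdvd
    simp only [mem_filter, mem_univ, true_and] at hst hst'
    have h0 := subst_eq_zero_of_dvd hdvd
    rw [map_sub, subst_X, subst_X] at h0
    by_cases h2 : t' = t
    · have hs : s' ≠ s := fun h => hne (by rw [h, h2])
      have hs't : s' ≠ t := fun h => (ne_of_lt (h2 ▸ hst')) h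
      rw [if_pos (congrArg y h2), if_neg (fun h => hs't (hy h))] at h0
      exact hXne s s' (fun h => hs h.symm) h0
    · rw [if_neg (fun h => h2 (hy h))] at h0
      by_cases h1 : s' = t
      · rw [if_pos (congrArg y h1)] at h0
        have : t' ≠ s := fun h => (lt_asymm hst) (by rw [← h, ← h1]; exact hst')
        exact hXne t' s this h0
      · rw [if_neg (fun h => h1 (hy h))] at h0
        exact hXne t' s' (ne_of_lt hst').symm h0
  · rintro ⟨s, t⟩ hst
    simp only [mem_filter, mem_univ, true_and] at hst
    apply dvd_of_subst_eq_zero (u := y t) (v := y s)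
    rw [RingHom.map_det]
    apply Matrix.det_zero_of_row_eq (ne_of_lt hst)
    funext j
    show subst (y t) (y s) (X (y s) ^ e j) = subst (y t) (y s) (X (y t) ^ e j)
    rw [map_pow, map_pow, subst_X, subst_X, if_neg (fun h => (ne_of_lt hst) (hy h)), if_pos rfl]


section Main

variable {τ : Type*} [DecidableEq τ]

/-- the `1×` scalar row matrix `N f`. -/
noncomputable def Nmat (m : ℕ) (k : ℕ → ℕ) (z : τ) {n : ℕ} (xv : Fin n → τ)
    (f : Fin m → Fin n) : Matrix (Fin (m + 1)) (Fin (m + 1)) (MvPolynomial τ ℂ) :=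
  Matrix.of (Fin.cases (fun j => (X z : MvPolynomial τ ℂ) ^ k (j : ℕ))
    (fun i' j => (X (xv (f i')) : MvPolynomial τ ℂ) ^ k (j : ℕ)))

noncomputable def Bmat (m a b : ℕ) (k l : ℕ → ℕ) (z : τ) {n : ℕ} (xv av : Fin n → τ)
    (f : Fin m → Fin n) : Matrix (Fin (m + 1)) (Fin (m + 1)) (MvPolynomial τ ℂ) :=
  Matrix.of (Fin.cases (fun j => (X z : MvPolynomial τ ℂ) ^ (a + k (j : ℕ)))
    (fun i' j => X (av (f i')) * (X (xv (f i')) : MvPolynomial τ ℂ) ^ (b + l (i' : ℕ) + k (j : ℕ))))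

noncomputable def cf (m a b : ℕ) (l : ℕ → ℕ) (z : τ) {n : ℕ} (xv av : Fin n → τ)
    (f : Fin m → Fin n) : MvPolynomial τ ℂ :=
  (X z : MvPolynomial τ ℂ) ^ a *
    ∏ i : Fin m, (X (av (f i)) * (X (xv (f i)) : MvPolynomial τ ℂ) ^ (b + l (i : ℕ)))

noncomputable def Emat (m : ℕ) (l : ℕ → ℕ) {n : ℕ} (xv : Fin n → τ)
    (ω : Fin m → Fin n) : Matrix (Fin m) (Fin m) (MvPolynomial τ ℂ) :=
  Matrix.of fun i j => (X (xv (ω i)) : MvPolynomial τ ℂ) ^ l (j : ℕ)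

lemma step1 (n m : ℕ) (hn : 0 < n) (a b : ℕ) (k l : ℕ → ℕ) (z : τ) (xv av : Fin n → τ) :
    Matrix.det (Matrix.of fun i j : Fin (m + 1) =>
        if (i : ℕ) = 0 then (X z : MvPolynomial τ ℂ) ^ (a + k (j : ℕ))
        else ∑ r : Fin n, X (av r) * X (xv r) ^ (b + l ((i : ℕ) - 1) + k (j : ℕ)))
    = ∑ f : Fin m → Fin n, (Bmat m a b k l z xv av f).det := by
  classical
  set g : Fin (m + 1) → Fin n → (Fin (m + 1) → MvPolynomial τ ℂ) :=
    fun i => Fin.cases (motive := fun _ => Fin n → (Fin (m + 1) → MvPolynomial τ ℂ))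
      (fun r => if r = ⟨0, hn⟩ then (fun j => (X z : MvPolynomial τ ℂ) ^ (a + k (j : ℕ))) else 0)
      (fun i' r j => X (av r) * (X (xv r) : MvPolynomial τ ℂ) ^ (b + l (i' : ℕ) + k (j : ℕ))) i
    with hg
  have h0 : (Matrix.of fun i j : Fin (m + 1) =>
        if (i : ℕ) = 0 then (X z : MvPolynomial τ ℂ) ^ (a + k (j : ℕ))
        else ∑ r : Fin n, X (av r) * X (xv r) ^ (b + l ((i : ℕ) - 1) + k (j : ℕ)))
      = Matrix.of (fun i => ∑ r : Fin n, g i r) := by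
    apply Matrix.ext
    intro i j
    induction i using Fin.cases with
    | zero =>
        simp only [Matrix.of_apply]
        have h' : (∑ r : Fin n, g 0 r)
            = fun j' : Fin (m + 1) => (X z : MvPolynomial τ ℂ) ^ (a + k (j' : ℕ)) := by
          simp only [hg, Fin.cases_zero]
          rw [Finset.sum_ite_eq' Finset.univ]
          simp
        rw [h']
        simp
    | succ i' =>
        simp only [Matrix.of_apply]
        have h' : (∑ r : Fin n, g i'.succ r)
            = fun j' : Fin (m + 1) => ∑ r : Fin n,
                X (av r) * (X (xv r) : MvPolynomial τ ℂ) ^ (b + l (i' : ℕ) + k (j' : ℕ)) := by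
          simp only [hg, Fin.cases_succ]
          funext j'
          rw [Finset.sum_apply]
        rw [h']
        simp [Fin.val_succ]
  rw [h0]
  have h1 : (Matrix.of (fun i => ∑ r : Fin n, g i r)).det
      = ∑ rr : Fin (m + 1) → Fin n, (Matrix.of (fun i => g i (rr i))).det :=
    (Matrix.detRowAlternating :
      (Fin (m + 1) → MvPolynomial τ ℂ) [⋀^Fin (m + 1)]→ₗ[MvPolynomial τ ℂ]
        MvPolynomial τ ℂ).toMultilinearMap.map_sum (g := g)
  rw [h1, ← Finset.sum_filter_add_sum_filter_not Finset.univ (fun rr => rr 0 = ⟨0, hn⟩)]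
  have h2 : ∑ rr ∈ Finset.univ.filter (fun rr : Fin (m + 1) → Fin n => ¬ rr 0 = ⟨0, hn⟩),
      (Matrix.of (fun i => g i (rr i))).det = 0 := by
    apply Finset.sum_eq_zero
    intro rr hrr
    simp only [mem_filter] at hrr
    apply Matrix.det_eq_zero_of_row_eq_zero 0
    intro j
    simp [g, hrr.2]
  rw [h2, add_zero]
  refine Finset.sum_nbij' (i := fun rr => rr ∘ Fin.succ) (j := fun f => Fin.cases ⟨0, hn⟩ f)
    (fun _ _ => Finset.mem_univ _) ?_ ?_ ?_ ?_
  · intro f _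
    simp [Finset.mem_filter]
  · intro rr hrr
    simp only [mem_filter] at hrr
    funext i
    induction i using Fin.cases with
    | zero => simpa using hrr.2.symm
    | succ i' => simp
  · intro f _
    funext i'
    simp
  · intro rr hrr
    simp only [mem_filter] at hrr
    congr 1
    apply Matrix.ext
    intro i j
    induction i using Fin.cases with
    | zero => simp [g, hrr.2, Bmat]
    | succ i' => simp [g, Bmat]


lemma step2 (m a b : ℕ) (k l : ℕ → ℕ) (z : τ) {n : ℕ} (xv av : Fin n → τ)
    (f : Fin m → Fin n) :
    (Bmat m a b k l z xv av f).det = cf m a b l z xv av f * (Nmat m k z xv f).det := by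
  have hB : Bmat m a b k l z xv av f = Matrix.of (fun i j =>
      (Fin.cases ((X z : MvPolynomial τ ℂ) ^ a)
        (fun i' => X (av (f i')) * (X (xv (f i')) : MvPolynomial τ ℂ) ^ (b + l (i' : ℕ))) i)
      * Nmat m k z xv f i j) := by
    apply Matrix.ext
    intro i j
    induction i using Fin.cases with
    | zero => simp [Bmat, Nmat, pow_add]
    | succ i' =>
        simp only [Bmat, Nmat, Matrix.of_apply, Fin.cases_succ]
        rw [pow_add, pow_add]
        ring
  rw [hB, Matrix.det_mul_column]
  congr 1
  rw [Fin.prod_univ_succ]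
  simp [cf]

lemma step3 (m : ℕ) (k : ℕ → ℕ) (z : τ) {n : ℕ} (xv : Fin n → τ)
    (f : Fin m → Fin n) (hf : ¬ Function.Injective f) :
    (Nmat m k z xv f).det = 0 := by
  rw [Function.not_injective_iff] at hf
  obtain ⟨s, t, hval, hne⟩ := hf
  apply Matrix.det_zero_of_row_eq (i := s.succ) (j := t.succ)
    (fun h => hne (Fin.succ_injective _ h))
  funext j
  simp [Nmat, hval]


lemma step4 {n m : ℕ} (F : (Fin m → Fin n) → MvPolynomial τ ℂ) :
    ∑ f ∈ Finset.univ.filter (fun f : Fin m → Fin n => Function.Injective f), F f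
    = ∑ ω ∈ Finset.univ.filter
        (fun ω : Fin m → Fin n => ∀ s t : Fin m, s < t → ω s < ω t),
        ∑ σ : Equiv.Perm (Fin m), F (ω ∘ ⇑σ) := by
  classical
  rw [← Finset.sum_product (s := Finset.univ.filter
        (fun ω : Fin m → Fin n => ∀ s t : Fin m, s < t → ω s < ω t))
      (t := Finset.univ)
      (f := fun q : (Fin m → Fin n) × Equiv.Perm (Fin m) => F (q.1 ∘ ⇑q.2))]
  refine (Finset.sum_bij
    (i := fun (q : (Fin m → Fin n) × Equiv.Perm (Fin m)) _ => q.1 ∘ ⇑q.2) ?_ ?_ ?_ ?_).symm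
  · intro q hq
    simp only [Finset.mem_product, Finset.mem_filter, Finset.mem_univ, true_and] at hq
    have hmono : StrictMono q.1 := fun s t h => hq.1 s t h
    exact Finset.mem_filter.mpr ⟨Finset.mem_univ _, hmono.injective.comp q.2.injective⟩
  · intro q1 h1 q2 h2 heq
    have heq' : q1.1 ∘ ⇑q1.2 = q2.1 ∘ ⇑q2.2 := heq
    haveI : WellFoundedLT (Fin m) := ⟨(measure (fun i : Fin m => (i : ℕ))).wf⟩
    simp only [Finset.mem_product, Finset.mem_filter, Finset.mem_univ, true_and] at h1 h2
    have hm1 : StrictMono q1.1 := fun s t h => h1.1 s t h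
    have hm2 : StrictMono q2.1 := fun s t h => h2.1 s t h
    have hr : Set.range q1.1 = Set.range q2.1 := by
      rw [← q1.2.surjective.range_comp q1.1, ← q2.2.surjective.range_comp q2.1, heq']
    have hω : q1.1 = q2.1 := hm1.range_inj hm2 |>.mp hr
    have hσ : q1.2 = q2.2 := by
      apply Equiv.ext
      intro i
      apply hm1.injective
      have h3 := congrFun heq' i
      rwa [← hω] at h3
    exact Prod.ext hω hσ
  · intro f hf
    simp only [Finset.mem_filter, Finset.mem_univ, true_and] at hf
    refine ⟨(f ∘ ⇑(Tuple.sort f), (Tuple.sort f)⁻¹), ?_, ?_⟩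
    · refine Finset.mem_product.mpr ⟨Finset.mem_filter.mpr ⟨Finset.mem_univ _, ?_⟩,
        Finset.mem_univ _⟩
      intro s t hst
      exact ((Tuple.monotone_sort f).strictMono_of_injective
        (hf.comp (Equiv.injective _))) hst
    · funext i
      simp
  · intro q hq
    rfl

lemma step5 (m a b : ℕ) (k l : ℕ → ℕ) (z : τ) {n : ℕ} (xv av : Fin n → τ)
    (ω : Fin m → Fin n) :
    ∑ σ : Equiv.Perm (Fin m),
        cf m a b l z xv av (ω ∘ ⇑σ) * (Nmat m k z xv (ω ∘ ⇑σ)).det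
    = ((X z : MvPolynomial τ ℂ) ^ a *
        ∏ i : Fin m, (X (av (ω i)) * (X (xv (ω i)) : MvPolynomial τ ℂ) ^ b))
      * (Nmat m k z xv ω).det * (Emat m l xv ω).det := by
  have hc : ∀ σ : Equiv.Perm (Fin m), cf m a b l z xv av (ω ∘ ⇑σ)
      = ((X z : MvPolynomial τ ℂ) ^ a *
          ∏ i : Fin m, (X (av (ω i)) * (X (xv (ω i)) : MvPolynomial τ ℂ) ^ b))
        * ∏ i : Fin m, (X (xv (ω (σ i))) : MvPolynomial τ ℂ) ^ l (i : ℕ) := by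
    intro σ
    unfold cf
    have h1 : (∏ i : Fin m,
        (X (av (ω (σ i))) * (X (xv (ω (σ i))) : MvPolynomial τ ℂ) ^ (b + l (i : ℕ))))
        = (∏ i : Fin m, (X (av (ω i)) * (X (xv (ω i)) : MvPolynomial τ ℂ) ^ b))
          * ∏ i : Fin m, (X (xv (ω (σ i))) : MvPolynomial τ ℂ) ^ l (i : ℕ) := by
      calc (∏ i : Fin m,
          (X (av (ω (σ i))) * (X (xv (ω (σ i))) : MvPolynomial τ ℂ) ^ (b + l (i : ℕ))))
          = ∏ i : Fin m, ((X (av (ω (σ i))) * (X (xv (ω (σ i))) : MvPolynomial τ ℂ) ^ b)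
              * (X (xv (ω (σ i))) : MvPolynomial τ ℂ) ^ l (i : ℕ)) := by
            refine Finset.prod_congr rfl fun i _ => ?_
            rw [pow_add]
            ring
        _ = (∏ i : Fin m, (X (av (ω (σ i))) * (X (xv (ω (σ i))) : MvPolynomial τ ℂ) ^ b))
              * ∏ i : Fin m, (X (xv (ω (σ i))) : MvPolynomial τ ℂ) ^ l (i : ℕ) :=
            Finset.prod_mul_distrib
        _ = (∏ i : Fin m, (X (av (ω i)) * (X (xv (ω i)) : MvPolynomial τ ℂ) ^ b))
              * ∏ i : Fin m, (X (xv (ω (σ i))) : MvPolynomial τ ℂ) ^ l (i : ℕ) := by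
            rw [Equiv.prod_comp σ
              (fun i => X (av (ω i)) * (X (xv (ω i)) : MvPolynomial τ ℂ) ^ b)]
    rw [show (fun i => X (av ((ω ∘ ⇑σ) i)) *
        (X (xv ((ω ∘ ⇑σ) i)) : MvPolynomial τ ℂ) ^ (b + l (i : ℕ)))
      = (fun i => X (av (ω (σ i))) *
        (X (xv (ω (σ i))) : MvPolynomial τ ℂ) ^ (b + l (i : ℕ))) from rfl, h1]
    ring
  have hN : ∀ σ : Equiv.Perm (Fin m), (Nmat m k z xv (ω ∘ ⇑σ)).det
      = ((Equiv.Perm.sign σ : ℤ) : MvPolynomial τ ℂ) * (Nmat m k z xv ω).det := by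
    intro σ
    have hsub : Nmat m k z xv (ω ∘ ⇑σ)
        = (Nmat m k z xv ω).submatrix (Equiv.Perm.decomposeFin.symm (0, σ)) id := by
      apply Matrix.ext
      intro i j
      induction i using Fin.cases with
      | zero =>
          simp [Nmat, Matrix.submatrix_apply, Equiv.Perm.decomposeFin_symm_apply_zero]
      | succ x =>
          simp [Nmat, Matrix.submatrix_apply, Equiv.Perm.decomposeFin_symm_apply_succ,
            Equiv.swap_self]
    rw [hsub, Matrix.det_permute]
    norm_num
  calc ∑ σ : Equiv.Perm (Fin m),
        cf m a b l z xv av (ω ∘ ⇑σ) * (Nmat m k z xv (ω ∘ ⇑σ)).det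
      = ∑ σ : Equiv.Perm (Fin m),
          (((X z : MvPolynomial τ ℂ) ^ a *
            ∏ i : Fin m, (X (av (ω i)) * (X (xv (ω i)) : MvPolynomial τ ℂ) ^ b))
            * (Nmat m k z xv ω).det)
          * (((Equiv.Perm.sign σ : ℤ) : MvPolynomial τ ℂ)
            * ∏ i : Fin m, (X (xv (ω (σ i))) : MvPolynomial τ ℂ) ^ l (i : ℕ)) := by
        refine Finset.sum_congr rfl fun σ _ => ?_
        rw [hc σ, hN σ]
        ring
    _ = (((X z : MvPolynomial τ ℂ) ^ a *
          ∏ i : Fin m, (X (av (ω i)) * (X (xv (ω i)) : MvPolynomial τ ℂ) ^ b))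
          * (Nmat m k z xv ω).det)
        * ∑ σ : Equiv.Perm (Fin m), (((Equiv.Perm.sign σ : ℤ) : MvPolynomial τ ℂ)
            * ∏ i : Fin m, (X (xv (ω (σ i))) : MvPolynomial τ ℂ) ^ l (i : ℕ)) := by
        rw [Finset.mul_sum]
    _ = _ := by
        rw [Matrix.det_apply' (Emat m l xv ω)]
        simp only [Emat, Matrix.of_apply]


lemma step6 (m : ℕ) {n : ℕ} (z : τ) (xv : Fin n → τ) (ω : Fin m → Fin n) :
    (∏ p ∈ Finset.univ.filter (fun p : Fin (m + 1) × Fin (m + 1) => p.1 < p.2),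
      ((X (Fin.cases z (fun i => xv (ω i)) p.2) : MvPolynomial τ ℂ)
        - X (Fin.cases z (fun i => xv (ω i)) p.1)))
    = (∏ s : Fin m, ((X (xv (ω s)) : MvPolynomial τ ℂ) - X z)) *
      ∏ p ∈ Finset.univ.filter (fun p : Fin m × Fin m => p.1 < p.2),
        ((X (xv (ω p.2)) : MvPolynomial τ ℂ) - X (xv (ω p.1))) := by
  classical
  rw [← Finset.prod_filter_mul_prod_filter_not
      (Finset.univ.filter (fun p : Fin (m + 1) × Fin (m + 1) => p.1 < p.2))
      (fun p => p.1 = 0)]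
  congr 1
  · refine (Finset.prod_bij
      (i := fun (t : Fin m) (_ : t ∈ Finset.univ) => ((0 : Fin (m + 1)), t.succ))
      ?_ ?_ ?_ ?_).symm
    · intro t _
      simp only [Finset.mem_filter, Finset.mem_univ, true_and]
      exact ⟨t.succ_pos, trivial⟩
    · intro t1 _ t2 _ h
      exact Fin.succ_injective _ (congrArg Prod.snd h)
    · intro p hp
      simp only [Finset.mem_filter, Finset.mem_univ, true_and] at hp
      have h2 : p.2 ≠ 0 := Fin.pos_iff_ne_zero.mp (hp.2 ▸ hp.1)
      obtain ⟨t, ht⟩ := Fin.exists_succ_eq_of_ne_zero h2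
      exact ⟨t, Finset.mem_univ t, Prod.ext hp.2.symm ht⟩
    · intro t _
      simp
  · refine (Finset.prod_bij
      (i := fun (p : Fin m × Fin m) (_ : p ∈ Finset.univ.filter
        (fun p : Fin m × Fin m => p.1 < p.2)) => (p.1.succ, p.2.succ)) ?_ ?_ ?_ ?_).symm
    · intro p hp
      simp only [Finset.mem_filter, Finset.mem_univ, true_and] at hp ⊢
      exact ⟨Fin.succ_lt_succ_iff.mpr hp, Fin.succ_ne_zero _⟩
    · intro p1 _ p2 _ h
      rw [Prod.ext_iff] at h
      exact Prod.ext (Fin.succ_injective _ h.1) (Fin.succ_injective _ h.2)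
    · intro q hq
      simp only [Finset.mem_filter, Finset.mem_univ, true_and] at hq
      have h1 : q.1 ≠ 0 := hq.2
      have h2 : q.2 ≠ 0 := Fin.pos_iff_ne_zero.mp (lt_trans (Fin.pos_iff_ne_zero.mpr h1) hq.1)
      obtain ⟨s, hs⟩ := Fin.exists_succ_eq_of_ne_zero h1
      obtain ⟨t, ht⟩ := Fin.exists_succ_eq_of_ne_zero h2
      refine ⟨(s, t), ?_, ?_⟩
      · simp only [Finset.mem_filter, Finset.mem_univ, true_and]
        rw [← Fin.succ_lt_succ_iff, hs, ht]
        exact hq.1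
      · exact Prod.ext hs ht
    · intro p _
      simp

lemma gamma_main (n m : ℕ) (hn : 0 < n) (a b : ℕ) (k l : ℕ → ℕ)
    (z : τ) (xv av : Fin n → τ)
    (hxz : ∀ r, xv r ≠ z) (hxinj : Function.Injective xv) :
    ∃ φ : (Fin m → Fin n) → MvPolynomial τ ℂ,
      (Matrix.det (Matrix.of fun i j : Fin (m + 1) =>
          if (i : ℕ) = 0 then (X z : MvPolynomial τ ℂ) ^ (a + k (j : ℕ))
          else ∑ r : Fin n, X (av r) * X (xv r) ^ (b + l ((i : ℕ) - 1) + k (j : ℕ)))) =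
      ∑ ω ∈ Finset.univ.filter
          (fun ω : Fin m → Fin n => ∀ s t : Fin m, s < t → ω s < ω t),
        (∏ s : Fin m, ((X (xv (ω s)) : MvPolynomial τ ℂ) - X z)) *
        (∏ p ∈ Finset.univ.filter (fun p : Fin m × Fin m => p.1 < p.2),
            ((X (xv (ω p.2)) : MvPolynomial τ ℂ) - X (xv (ω p.1))) ^ 2) *
        φ ω := by
  classical
  have key : ∀ ω : Fin m → Fin n, ∃ q : MvPolynomial τ ℂ,
      (∀ s t : Fin m, s < t → ω s < ω t) →
      (((X z : MvPolynomial τ ℂ) ^ a *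
          ∏ i : Fin m, (X (av (ω i)) * (X (xv (ω i)) : MvPolynomial τ ℂ) ^ b))
        * (Nmat m k z xv ω).det * (Emat m l xv ω).det
        = (∏ s : Fin m, ((X (xv (ω s)) : MvPolynomial τ ℂ) - X z)) *
          (∏ p ∈ Finset.univ.filter (fun p : Fin m × Fin m => p.1 < p.2),
            ((X (xv (ω p.2)) : MvPolynomial τ ℂ) - X (xv (ω p.1))) ^ 2) * q) := by
    intro ω
    by_cases hω : ∀ s t : Fin m, s < t → ω s < ω t
    · have hmono : StrictMono ω := fun s t h => hω s t h
      have hyinj : Function.Injective (Fin.cases z (fun i => xv (ω i)) : Fin (m + 1) → τ) := by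
        intro i j hij
        induction i using Fin.cases with
        | zero =>
            induction j using Fin.cases with
            | zero => rfl
            | succ j' =>
                simp only [Fin.cases_zero, Fin.cases_succ] at hij
                exact absurd hij.symm (hxz _)
        | succ i' =>
            induction j using Fin.cases with
            | zero =>
                simp only [Fin.cases_zero, Fin.cases_succ] at hij
                exact absurd hij (hxz _)
            | succ j' =>
                simp only [Fin.cases_succ] at hij
                exact congrArg Fin.succ (hmono.injective (hxinj hij))
      have hdvd1 : (∏ p ∈ Finset.univ.filter
            (fun p : Fin (m + 1) × Fin (m + 1) => p.1 < p.2),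
          ((X (Fin.cases z (fun i => xv (ω i)) p.2) : MvPolynomial τ ℂ)
            - X (Fin.cases z (fun i => xv (ω i)) p.1))) ∣ (Nmat m k z xv ω).det := by
        have h := vandermonde_dvd (Fin.cases z (fun i => xv (ω i)) : Fin (m + 1) → τ)
          hyinj (fun j => k (j : ℕ))
        have hNeq : (Matrix.of fun i j : Fin (m + 1) =>
            (X (Fin.cases z (fun i' => xv (ω i')) i) : MvPolynomial τ ℂ) ^ k (j : ℕ))
            = Nmat m k z xv ω := by
          apply Matrix.ext
          intro i j
          induction i using Fin.cases with
          | zero => simp [Nmat]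
          | succ i' => simp [Nmat]
        rwa [hNeq] at h
      have hdvd2 : (∏ p ∈ Finset.univ.filter (fun p : Fin m × Fin m => p.1 < p.2),
          ((X (xv (ω p.2)) : MvPolynomial τ ℂ) - X (xv (ω p.1)))) ∣ (Emat m l xv ω).det :=
        vandermonde_dvd (fun i : Fin m => xv (ω i))
          (fun i j h => hmono.injective (hxinj h)) (fun j => l (j : ℕ))
      obtain ⟨q1, e1⟩ := hdvd1
      obtain ⟨q2, e2⟩ := hdvd2
      refine ⟨((X z : MvPolynomial τ ℂ) ^ a *
          ∏ i : Fin m, (X (av (ω i)) * (X (xv (ω i)) : MvPolynomial τ ℂ) ^ b)) * q1 * q2,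
        fun _ => ?_⟩
      rw [e1, e2, step6 m z xv ω, Finset.prod_pow]
      ring
    · exact ⟨0, fun h => absurd h hω⟩
  choose φ hφ using key
  refine ⟨φ, ?_⟩
  rw [step1 n m hn a b k l z xv av]
  rw [show (∑ f : Fin m → Fin n, (Bmat m a b k l z xv av f).det)
      = ∑ f : Fin m → Fin n, cf m a b l z xv av f * (Nmat m k z xv f).det from
    Finset.sum_congr rfl (fun f _ => step2 m a b k l z xv av f)]
  rw [← Finset.sum_filter_add_sum_filter_not Finset.univ
      (fun f : Fin m → Fin n => Function.Injective f)]
  have hzero : ∑ f ∈ Finset.univ.filter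
      (fun f : Fin m → Fin n => ¬ Function.Injective f),
      cf m a b l z xv av f * (Nmat m k z xv f).det = 0 :=
    Finset.sum_eq_zero fun f hf => by
      rw [step3 m k z xv f (Finset.mem_filter.mp hf).2, mul_zero]
  rw [hzero, add_zero, step4]
  refine Finset.sum_congr rfl fun ω hω => ?_
  have hωS : ∀ s t : Fin m, s < t → ω s < ω t := (Finset.mem_filter.mp hω).2
  rw [step5 m a b k l z xv av ω]
  exact hφ ω hωS

end Main

end GammaAux


end GammaAuxSection


/-- Theorem 4.3 (formal version): in the polynomial ring
`R = ℂ[Z, X_1,…,X_n, A_1,…,A_n]` (variables indexed by `Option (Fin n ⊕ Fin n)`, with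
`Z = none`, `X_j = some (inl j)`, `A_j = some (inr j)`), the determinant `Γ` built from the
formal moments `M_s = ∑_j A_j X_j^s` decomposes as a sum over strictly increasing tuples
`ω = (ω_1 < … < ω_{n-κ})` of the products
`(∏_s (X_{ω_s} - Z)) (∏_{s<t} (X_{ω_t} - X_{ω_s})²) φ_ω`. -/
theorem gamma_decomposition
    (n κ : ℕ) (hn : 2 ≤ n) (hκ1 : 1 ≤ κ) (hκ2 : κ ≤ n - 1)
    (a b : ℕ) (k l : ℕ → ℕ)
    (hk0 : k 0 = 0) (hkmono : ∀ i j, i < j → j ≤ n - κ → k i < k j)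
    (hl0 : l 0 = 0) (hlmono : ∀ i j, i < j → j ≤ n - κ - 1 → l i < l j) :
    ∃ φ : (Fin (n - κ) → Fin n) → MvPolynomial (Option (Fin n ⊕ Fin n)) ℂ,
      (Matrix.det (Matrix.of fun i j : Fin (n - κ + 1) =>
          if (i : ℕ) = 0 then
            (MvPolynomial.X none : MvPolynomial (Option (Fin n ⊕ Fin n)) ℂ) ^ (a + k (j : ℕ))
          else
            ∑ r : Fin n, MvPolynomial.X (some (Sum.inr r)) *
              MvPolynomial.X (some (Sum.inl r)) ^ (b + l ((i : ℕ) - 1) + k (j : ℕ)))) =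
      ∑ ω ∈ Finset.univ.filter
          (fun ω : Fin (n - κ) → Fin n => ∀ s t : Fin (n - κ), s < t → ω s < ω t),
        (∏ s : Fin (n - κ),
            (MvPolynomial.X (some (Sum.inl (ω s))) - MvPolynomial.X none)) *
        (∏ p ∈ Finset.univ.filter (fun p : Fin (n - κ) × Fin (n - κ) => p.1 < p.2),
            (MvPolynomial.X (some (Sum.inl (ω p.2))) -
              MvPolynomial.X (some (Sum.inl (ω p.1)))) ^ 2) *
        φ ω := by
  obtain ⟨φ, hφ⟩ := GammaAux.gamma_main n (n - κ) (by omega) a b k l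
    (none : Option (Fin n ⊕ Fin n)) (fun r => some (Sum.inl r)) (fun r => some (Sum.inr r))
    (fun r h => by cases h)
    (fun r r' h => by
      simpa using h)
  exact ⟨φ, hφ⟩
end

section
/- Fix integers n ≥ 2, ζ ≥ 1 and cluster sizes ℓ_1,…,ℓ_ζ ≥ 1 with ℓ_1+…+ℓ_ζ = n and ℓ* = max_s ℓ_s, and fix τ > 1, η > 1, T > 0. Then there exists a constant C > 0, depending only on these fixed parameters and not on δ, such that the following holds. Let x_1,…,x_n on the unit circle form an (n,ζ,δ,τ,η,T)-clustered configuration with clusters C_1,…,C_ζ of sizes ℓ_1,…,ℓ_ζ (0 < δ < 1, τδ < T); fix j* ∈ C_μ and z ∈ ℂ with |z − x_{j*}| = ρ*, where ρ* = ρ̄* δ^{2(ℓ*−ℓ_μ)+1} and 0 < ρ̄* < (1/3)·min(1, ηT); let 0 < ε̄ < 1 and ε = ε̄ δ^{2ℓ*−1}; set ϱ = n(n−1)/2 − ∑_s ℓ_s(ℓ_s−1)/2 and N = n(n−1)+2ℓ*−ℓ_μ−2ϱ. For a strictly increasing tuple ω = (ω_1 < … < ω_{n−1}) of n−1 indices from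 {1,…,n}, omitting exactly one index i₀, set P_ω = (∏_{s=1}^{n−1} |x_{ω_s} − z|)·(∏_{1 ≤ s < t ≤ n−1} |x_{ω_t} − x_{ω_s}|²). Then: (i) if i₀ = j*, then ε·P_ω ≤ C ε̄ δ^N; (ii) if i₀ ∈ C_μ and i₀ ≠ j*, then ε·P_ω ≤ C ε̄ ρ̄* δ^{N+2(ℓ*−ℓ_μ)}; (iii) if i₀ ∈ C_ι with ι ≠ μ, then ε·P_ω ≤ C ε̄ ρ̄* δ^{N+2(ℓ*−ℓ_ι)+1}. -/
open Finset

lemma aux_choose2 (k : ℕ) : 2 * k.choose 2 = k * (k - 1) := by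
  rcases k with _ | j
  · simp
  · rw [Nat.choose_two_right]
    refine Nat.mul_div_cancel' ?_
    simpa [Nat.mul_comm, Nat.succ_sub_one] using (Nat.even_mul_succ_self j).two_dvd

lemma aux_half_card {α : Type*} [DecidableEq α] [LinearOrder α] (T : Finset α) :
    (T.offDiag.filter fun p => p.1 < p.2).card = T.card.choose 2 := by
  have hsplit : T.offDiag = (T.offDiag.filter fun p => p.1 < p.2) ∪ (T.offDiag.filter fun p => p.2 < p.1) := by
    rw [← Finset.filter_or]
    refine (Finset.filter_true_of_mem ?_).symm
    intro p hp
    exact lt_or_gt_of_ne (Finset.mem_offDiag.mp hp).2.2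
  have hdisj : Disjoint (T.offDiag.filter fun p => p.1 < p.2) (T.offDiag.filter fun p => p.2 < p.1) := by
    rw [Finset.disjoint_left]
    intro p hp hq
    exact absurd (Finset.mem_filter.mp hq).2 (not_lt.mpr (Finset.mem_filter.mp hp).2.le)
  have hcardeq : (T.offDiag.filter fun p => p.1 < p.2).card = (T.offDiag.filter fun p => p.2 < p.1).card := by
    apply Finset.card_nbij (fun p => p.swap)
    · intro p hp
      simp only [Finset.mem_coe, Finset.mem_filter, Finset.mem_offDiag] at hp ⊢
      exact ⟨⟨hp.1.2.1, hp.1.1, hp.1.2.2.symm⟩, hp.2⟩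
    · intro p hp q hq h
      exact Prod.swap_injective h
    · intro p hp
      simp only [Finset.coe_filter, Set.mem_image, Set.mem_setOf_eq, Finset.mem_offDiag] at hp ⊢
      exact ⟨p.swap, ⟨⟨hp.1.2.1, hp.1.1, hp.1.2.2.symm⟩, hp.2⟩, p.swap_swap⟩
  have h2 : T.card * T.card - T.card = 2 * (T.offDiag.filter fun p => p.1 < p.2).card := by
    have hc := congrArg Finset.card hsplit
    rw [Finset.card_union_of_disjoint hdisj, Finset.offDiag_card] at hc
    omega
  have h3 := aux_choose2 T.card
  have h4 : T.card * (T.card - 1) = T.card * T.card - T.card := by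
    rcases T.card with _ | c
    · simp
    · have : (c+1)*(c+1) = (c+1)*c + (c+1) := by ring
      simp only [Nat.succ_sub_one]
      omega
  omega

lemma aux_mul2 (k : ℕ) : (k:ℤ) * ((k:ℤ) - 1) = 2 * (k.choose 2 : ℤ) := by
  have h := aux_choose2 k
  have h2 : (k*(k-1) : ℕ) + k = k*k := by
    cases k with
    | zero => simp
    | succ j => simp only [Nat.succ_sub_one]; ring
  have h4 : 2 * (k.choose 2) + k = k*k := by omega
  have h3 : ((k:ℤ))*((k:ℤ)) = 2*(k.choose 2:ℤ) + k := by exact_mod_cast h4.symm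
  linear_combination h3

lemma aux_div2 (k : ℕ) : ((k:ℤ) * ((k:ℤ) - 1)) / 2 = (k.choose 2 : ℤ) := by
  rw [aux_mul2]
  exact Int.mul_ediv_cancel_left _ two_ne_zero

lemma aux_choose_succ (k : ℕ) (hk : 1 ≤ k) :
    (k.choose 2 : ℤ) = ((k-1).choose 2 : ℤ) + (k:ℤ) - 1 := by
  rcases k with _ | j
  · omega
  · simp only [Nat.choose_succ_succ, Nat.choose_one_right, Nat.succ_sub_one]
    push_cast
    ring

set_option maxHeartbeats 1000000 in
/-- Lemma 5.4: bounds on `ε·P_ω` for strictly increasing tuples of length `n-1` (identified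
with the set `{1,…,n} \ {i₀}`), in the three cases determined by the cluster position of the
omitted index `i₀`. -/
theorem prony_P_estimates
    (n ζ : ℕ) (hn : 2 ≤ n) (hζ : 1 ≤ ζ)
    (ℓ : Fin ζ → ℕ) (hℓ : ∀ s, 1 ≤ ℓ s) (hsum : ∑ s, ℓ s = n)
    (lstar : ℕ) (hlstar : lstar = Finset.univ.sup ℓ)
    (τ η T : ℝ) (hτ : 1 < τ) (hη : 1 < η) (hT : 0 < T) :
    ∃ C₁ : ℝ, 0 < C₁ ∧
      ∀ (δ : ℝ) (x : Fin n → ℂ) (cl : Fin n → Fin ζ),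
        0 < δ → δ < 1 → τ * δ < T →
        (∀ j, ‖x j‖ = 1) →
        Function.Injective x →
        (∀ i j, i ≠ j → cl i = cl j →
          δ ≤ ‖x i - x j‖ ∧ ‖x i - x j‖ ≤ τ * δ) →
        (∀ i j, cl i ≠ cl j →
          T ≤ ‖x i - x j‖ ∧ ‖x i - x j‖ ≤ η * T) →
        (∀ s, (Finset.univ.filter fun j => cl j = s).card = ℓ s) →
        ∀ (jstar : Fin n) (ρbar εbar : ℝ) (z : ℂ) (ϱ N : ℤ),
          0 < ρbar → ρbar < (1 / 3) * min 1 (η * T) →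
          0 < εbar → εbar < 1 →
          ‖z - x jstar‖ =
            ρbar * δ ^ (2 * (lstar - ℓ (cl jstar)) + 1) →
          ϱ = (n : ℤ) * ((n : ℤ) - 1) / 2 - ∑ s, (ℓ s : ℤ) * ((ℓ s : ℤ) - 1) / 2 →
          N = (n : ℤ) * ((n : ℤ) - 1) + 2 * (lstar : ℤ) - (ℓ (cl jstar) : ℤ) - 2 * ϱ →
          ∀ i₀ : Fin n,
            ((i₀ = jstar →
              (εbar * δ ^ (2 * lstar - 1)) *
                ((∏ m ∈ Finset.univ.erase i₀, ‖x m - z‖) *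
                  ∏ p ∈ (Finset.univ.erase i₀).offDiag.filter (fun p => p.1 < p.2),
                    ‖x p.2 - x p.1‖ ^ 2) ≤
                C₁ * εbar * δ ^ N) ∧
            (cl i₀ = cl jstar → i₀ ≠ jstar →
              (εbar * δ ^ (2 * lstar - 1)) *
                ((∏ m ∈ Finset.univ.erase i₀, ‖x m - z‖) *
                  ∏ p ∈ (Finset.univ.erase i₀).offDiag.filter (fun p => p.1 < p.2),
                    ‖x p.2 - x p.1‖ ^ 2) ≤
                C₁ * εbar * ρbar *
                  δ ^ (N + 2 * ((lstar : ℤ) - (ℓ (cl jstar) : ℤ)))) ∧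
            (cl i₀ ≠ cl jstar →
              (εbar * δ ^ (2 * lstar - 1)) *
                ((∏ m ∈ Finset.univ.erase i₀, ‖x m - z‖) *
                  ∏ p ∈ (Finset.univ.erase i₀).offDiag.filter (fun p => p.1 < p.2),
                    ‖x p.2 - x p.1‖ ^ 2) ≤
                C₁ * εbar * ρbar *
                  δ ^ (N + 2 * ((lstar : ℤ) - (ℓ (cl i₀) : ℤ)) + 1))) := by
  set M : ℝ := τ + 1 + 2 * (η * T) + 3 with hMdef
  have hηT : 0 < η * T := by positivity
  have hM1 : (1:ℝ) ≤ M := by nlinarith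
  have hM0 : (0:ℝ) < M := by linarith
  set B : ℕ := 3*(n*n) + 3*n + 3 with hBdef
  refine ⟨M ^ B, by positivity, ?_⟩
  intro δ x cl hδ0 hδ1 hτδT hx1 hxinj hsame hdiff hcard jstar ρbar εbar z ϱ N hρ0 hρmin
    hε0 hε1 hz hϱ hN i₀
  have hlμ : ℓ (cl jstar) ≤ lstar := hlstar ▸ Finset.le_sup (Finset.mem_univ _)
  have hl1 : 1 ≤ lstar := le_trans (hℓ _) hlμ
  have hρ13 : ρbar ≤ 1/3 := by
    have h1 := min_le_left 1 (η * T)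
    nlinarith
  have hρηT3 : 3 * ρbar ≤ η * T := by
    have h1 := min_le_right 1 (η * T)
    nlinarith
  have hδpow : ∀ k : ℕ, 1 ≤ k → δ ^ k ≤ δ := by
    intro k hk
    simpa using pow_le_pow_of_le_one hδ0.le hδ1.le hk
  have hzle : ‖z - x jstar‖ ≤ ρbar * δ := by
    rw [hz]
    have := hδpow (2 * (lstar - ℓ (cl jstar)) + 1) (by omega)
    nlinarith
  -- per-factor bound for |x m - z|
  have hfac : ∀ m, m ≠ jstar →
      ‖x m - z‖ ≤ M * δ ^ (if cl m = cl jstar then 1 else 0) := by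
    intro m hm
    have ht : ‖x m - z‖ ≤
        ‖x m - x jstar‖ + ‖z - x jstar‖ := by
      have h := norm_sub_le_norm_sub_add_norm_sub (x m) (x jstar) z
      have h2 := norm_sub_rev (x jstar) z
      linarith
    by_cases hc : cl m = cl jstar
    · have h1 := (hsame m jstar hm hc).2
      rw [if_pos hc, pow_one]
      have hM' : τ + ρbar ≤ M := by rw [hMdef]; linarith
      have := mul_le_mul_of_nonneg_right hM' hδ0.le
      linarith
    · have h1 := (hdiff m jstar hc).2
      rw [if_neg hc, pow_zero, mul_one]
      have h2 : ‖z - x jstar‖ ≤ ρbar := by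
        have := mul_le_mul_of_nonneg_left hδ1.le hρ0.le
        linarith
      rw [hMdef]
      linarith
  -- per-factor bound for pairs
  have hpair : ∀ p : Fin n × Fin n, p.1 ≠ p.2 →
      ‖x p.2 - x p.1‖ ≤ M * δ ^ (if cl p.1 = cl p.2 then 1 else 0) := by
    intro p hp
    by_cases hc : cl p.1 = cl p.2
    · have h1 := (hsame p.2 p.1 hp.symm hc.symm).2
      rw [if_pos hc, pow_one]
      have hM' : τ ≤ M := by rw [hMdef]; linarith
      have := mul_le_mul_of_nonneg_right hM' hδ0.le
      linarith
    · have h1 := (hdiff p.2 p.1 fun h => hc h.symm).2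
      rw [if_neg hc, pow_zero, mul_one, hMdef]
      linarith
  -- product bound for |x m - z| over a set avoiding jstar
  have hprod1 : ∀ s : Finset (Fin n), jstar ∉ s →
      (∏ m ∈ s, ‖x m - z‖) ≤
        M ^ s.card * δ ^ (s.filter fun m => cl m = cl jstar).card := by
    intro s hs
    calc (∏ m ∈ s, ‖x m - z‖)
        ≤ ∏ m ∈ s, (M * δ ^ (if cl m = cl jstar then 1 else 0)) := by
          refine Finset.prod_le_prod (fun m _ => norm_nonneg _)
            (fun m hm => hfac m ?_)
          rintro rfl; exact hs hm
      _ = M ^ s.card * δ ^ ∑ m ∈ s, (if cl m = cl jstar then 1 else 0) := by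
          rw [Finset.prod_mul_distrib, Finset.prod_const, Finset.prod_pow_eq_pow_sum]
      _ = _ := by
          congr 1
          congr 1
          simpa using (Finset.sum_boole (p := fun m => cl m = cl jstar) (s := s))
    -- done
  set D := (Finset.univ.erase i₀).offDiag.filter (fun p : Fin n × Fin n => p.1 < p.2) with hDdef
  have hprod2 : (∏ p ∈ D, ‖x p.2 - x p.1‖ ^ 2) ≤
      (M ^ D.card * δ ^ (D.filter fun p => cl p.1 = cl p.2).card) ^ 2 := by
    calc (∏ p ∈ D, ‖x p.2 - x p.1‖ ^ 2)
        ≤ ∏ p ∈ D, (M * δ ^ (if cl p.1 = cl p.2 then 1 else 0)) ^ 2 := by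
          refine Finset.prod_le_prod (fun p _ => by positivity) (fun p hp => ?_)
          refine pow_le_pow_left₀ (norm_nonneg _) (hpair p ?_) 2
          have := Finset.mem_offDiag.mp (Finset.mem_filter.mp hp).1
          exact this.2.2
      _ = (∏ p ∈ D, (M * δ ^ (if cl p.1 = cl p.2 then 1 else 0))) ^ 2 := by
          rw [← Finset.prod_pow]
      _ = (M ^ D.card * δ ^ (D.filter fun p => cl p.1 = cl p.2).card) ^ 2 := by
          congr 1
          rw [Finset.prod_mul_distrib, Finset.prod_const, Finset.prod_pow_eq_pow_sum]
          congr 1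
          simpa using (Finset.sum_boole (p := fun p : Fin n × Fin n => cl p.1 = cl p.2) (s := D))
  -- cardinality of clusters within the erased set
  have hSs : ∀ s : Fin ζ, ((Finset.univ.erase i₀).filter fun m => cl m = s)
      = (Finset.univ.filter fun m => cl m = s).erase i₀ := by
    intro s
    rw [Finset.filter_erase]
  have hcardSs : ∀ s : Fin ζ,
      ((Finset.univ.erase i₀).filter fun m => cl m = s).card
        = ℓ s - (if cl i₀ = s then 1 else 0) := by
    intro s
    rw [hSs s]
    by_cases h : cl i₀ = s
    · rw [Finset.card_erase_of_mem (by simp [h]), hcard, if_pos h]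
    · rw [Finset.erase_eq_of_notMem (by simp [h]), hcard, if_neg h]
      simp
  -- count of same-cluster pairs
  have hWcount : (D.filter fun p => cl p.1 = cl p.2).card =
      ∑ s, (((Finset.univ.erase i₀).filter fun m => cl m = s).card).choose 2 := by
    have hset : (D.filter fun p => cl p.1 = cl p.2) =
        Finset.univ.biUnion (fun s : Fin ζ =>
          (((Finset.univ.erase i₀).filter fun m => cl m = s).offDiag.filter fun p => p.1 < p.2)) := by
      ext p
      simp only [hDdef, Finset.mem_filter, Finset.mem_biUnion, Finset.mem_offDiag,
        Finset.mem_univ, true_and]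
      constructor
      · rintro ⟨⟨⟨h1, h2, h3⟩, h4⟩, h5⟩
        exact ⟨cl p.1, ⟨⟨h1, rfl⟩, ⟨h2, h5.symm⟩, h3⟩, h4⟩
      · rintro ⟨s, ⟨⟨h1, hs1⟩, ⟨h2, hs2⟩, h3⟩, h4⟩
        exact ⟨⟨⟨h1, h2, h3⟩, h4⟩, hs1.trans hs2.symm⟩
    rw [hset, Finset.card_biUnion]
    · exact Finset.sum_congr rfl fun s _ => aux_half_card _
    · intro s _ t _ hst
      rw [Function.onFun, Finset.disjoint_left]
      intro p hp hq
      have h1 := (Finset.mem_filter.mp (Finset.mem_offDiag.mp (Finset.mem_filter.mp hp).1).1).2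
      have h2 := (Finset.mem_filter.mp (Finset.mem_offDiag.mp (Finset.mem_filter.mp hq).1).1).2
      exact hst (h1 ▸ h2 ▸ rfl)
  set K : ℤ := ∑ s, ((ℓ s).choose 2 : ℤ) with hKdef
  have hWval : ((D.filter fun p => cl p.1 = cl p.2).card : ℤ) = K - ((ℓ (cl i₀) : ℤ) - 1) := by
    rw [hWcount]
    push_cast
    have hterm : ∀ s : Fin ζ,
        ((((Finset.univ.erase i₀).filter fun m => cl m = s).card).choose 2 : ℤ)
          = ((ℓ s).choose 2 : ℤ) + (if cl i₀ = s then (1:ℤ) - (ℓ s : ℤ) else 0) := by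
      intro s
      rw [hcardSs s]
      by_cases h : cl i₀ = s
      · rw [if_pos h, if_pos h]
        have := aux_choose_succ (ℓ s) (hℓ s)
        omega
      · rw [if_neg h, if_neg h]
        simp
    rw [Finset.sum_congr rfl (fun s _ => hterm s), Finset.sum_add_distrib]
    have : (∑ s : Fin ζ, if cl i₀ = s then (1:ℤ) - (ℓ s : ℤ) else 0)
        = (1:ℤ) - (ℓ (cl i₀) : ℤ) := by
      rw [Finset.sum_ite_eq]
      simp
    rw [this, hKdef]
    ring
  have hϱ' : ϱ = (n.choose 2 : ℤ) - K := by
    have hsum2 : (∑ s, (ℓ s : ℤ) * ((ℓ s : ℤ) - 1) / 2) = K :=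
      Finset.sum_congr rfl fun s _ => aux_div2 (ℓ s)
    rw [hϱ, hsum2, aux_div2 n]
  have hNn : N = 2 * (n.choose 2 : ℤ) + 2 * (lstar : ℤ) - (ℓ (cl jstar) : ℤ) - 2 * ϱ := by
    rw [hN, aux_mul2 n]
  -- bounds on the number of D pairs
  have hDcard : D.card ≤ n * n := by
    have h1 : D.card ≤ (Finset.univ.erase i₀).offDiag.card := Finset.card_filter_le _ _
    rw [Finset.offDiag_card] at h1
    have h2 : (Finset.univ.erase i₀).card ≤ n := by
      calc (Finset.univ.erase i₀).card ≤ (Finset.univ : Finset (Fin n)).card :=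
            Finset.card_erase_le
        _ = n := by simp
    have := Nat.mul_le_mul h2 h2
    omega
  have hδN : ∀ (E : ℕ) (N' : ℤ), (E:ℤ) = N' → δ ^ E = δ ^ N' := by
    intro E N' h
    rw [← h, zpow_natCast]
  have hQnonneg : (0:ℝ) ≤ ∏ p ∈ D, ‖x p.2 - x p.1‖ ^ 2 :=
    Finset.prod_nonneg fun p _ => by positivity
  refine ⟨?_, ?_, ?_⟩
  -- Case (i)
  · rintro rfl
    have hP1 := hprod1 (Finset.univ.erase i₀) (Finset.notMem_erase _ _)
    have hc₁ := hcardSs (cl i₀)  -- card = ℓ μ - 1 (here jstar = i₀)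
    rw [if_pos rfl] at hc₁
    set c₁ := ((Finset.univ.erase i₀).filter fun m => cl m = cl i₀).card with hc₁def
    set W' := (D.filter fun p => cl p.1 = cl p.2).card with hW'def
    set cS := (Finset.univ.erase i₀).card with hcSdef
    have hcSn : cS ≤ n := by
      calc cS ≤ (Finset.univ : Finset (Fin n)).card := Finset.card_erase_le
        _ = n := by simp
    have hE : ((2 * lstar - 1 + (c₁ + 2 * W') : ℕ) : ℤ) = N := by
      have h1 : (c₁ : ℤ) = (ℓ (cl i₀) : ℤ) - 1 := by
        rw [hc₁]
        have := hℓ (cl i₀)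
        push_cast [Nat.cast_sub this]
        ring
      omega
    calc (εbar * δ ^ (2 * lstar - 1)) *
        ((∏ m ∈ Finset.univ.erase i₀, ‖x m - z‖) *
          ∏ p ∈ D, ‖x p.2 - x p.1‖ ^ 2)
        ≤ (εbar * δ ^ (2 * lstar - 1)) *
          ((M ^ cS * δ ^ c₁) * (M ^ D.card * δ ^ W') ^ 2) := by
          have h0 : (0:ℝ) ≤ εbar * δ ^ (2 * lstar - 1) := by positivity
          refine mul_le_mul_of_nonneg_left ?_ h0
          exact mul_le_mul hP1 hprod2 hQnonneg (by positivity)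
      _ = M ^ (cS + 2 * D.card) * (εbar * δ ^ (2 * lstar - 1 + (c₁ + 2 * W'))) := by
          ring
      _ ≤ M ^ B * (εbar * δ ^ (2 * lstar - 1 + (c₁ + 2 * W'))) := by
          refine mul_le_mul_of_nonneg_right (pow_le_pow_right₀ hM1 ?_) (by positivity)
          omega
      _ = M ^ B * εbar * δ ^ N := by
          rw [hδN _ N hE]; ring
  -- Case (ii)
  · intro hclμ hne
    have hjS : jstar ∈ Finset.univ.erase i₀ :=
      Finset.mem_erase.mpr ⟨fun h => hne h.symm, Finset.mem_univ _⟩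
    have hP1split : (∏ m ∈ Finset.univ.erase i₀, ‖x m - z‖)
        = ‖x jstar - z‖ *
          ∏ m ∈ (Finset.univ.erase i₀).erase jstar, ‖x m - z‖ :=
      (Finset.mul_prod_erase _ _ hjS).symm
    have hzval : ‖x jstar - z‖ = ρbar * δ ^ (2 * (lstar - ℓ (cl jstar)) + 1) := by
      rw [norm_sub_rev, hz]
    have hP1 := hprod1 ((Finset.univ.erase i₀).erase jstar) (Finset.notMem_erase _ _)
    -- cardinality of cluster μ within doubly-erased set
    have hfe : ((Finset.univ.erase i₀).erase jstar).filter (fun m => cl m = cl jstar)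
        = ((Finset.univ.filter fun m => cl m = cl jstar).erase i₀).erase jstar := by
      rw [Finset.filter_erase, hSs (cl jstar)]
    have hjmem : jstar ∈ (Finset.univ.filter fun m => cl m = cl jstar).erase i₀ :=
      Finset.mem_erase.mpr ⟨fun h => hne h.symm, by simp⟩
    have hlμ2 : 2 ≤ ℓ (cl jstar) := by
      have h1 : 1 ≤ ((Finset.univ.filter fun m => cl m = cl jstar).erase i₀).card :=
        Finset.card_pos.mpr ⟨jstar, hjmem⟩
      have h2 : ((Finset.univ.filter fun m => cl m = cl jstar).erase i₀).card
          = ℓ (cl jstar) - 1 := by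
        rw [Finset.card_erase_of_mem (by simp [hclμ]), hcard]
      omega
    have hc₁ : (((Finset.univ.erase i₀).erase jstar).filter (fun m => cl m = cl jstar)).card
        = ℓ (cl jstar) - 2 := by
      rw [hfe, Finset.card_erase_of_mem hjmem, Finset.card_erase_of_mem (by simp [hclμ]), hcard]
      omega
    set c₁ := (((Finset.univ.erase i₀).erase jstar).filter (fun m => cl m = cl jstar)).card
    set W' := (D.filter fun p => cl p.1 = cl p.2).card with hW'def
    set cS := ((Finset.univ.erase i₀).erase jstar).card with hcSdef
    have hcSn : cS ≤ n := by
      calc cS ≤ (Finset.univ.erase i₀).card := Finset.card_erase_le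
        _ ≤ (Finset.univ : Finset (Fin n)).card := Finset.card_erase_le
        _ = n := by simp
    have hE : ((2 * lstar - 1 + ((2 * (lstar - ℓ (cl jstar)) + 1) + (c₁ + 2 * W')) : ℕ) : ℤ)
        = N + 2 * ((lstar : ℤ) - (ℓ (cl jstar) : ℤ)) := by
      have hι : cl i₀ = cl jstar := hclμ
      rw [hι] at hWval
      omega
    calc (εbar * δ ^ (2 * lstar - 1)) *
        ((∏ m ∈ Finset.univ.erase i₀, ‖x m - z‖) *
          ∏ p ∈ D, ‖x p.2 - x p.1‖ ^ 2)
        ≤ (εbar * δ ^ (2 * lstar - 1)) *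
          ((ρbar * δ ^ (2 * (lstar - ℓ (cl jstar)) + 1) * (M ^ cS * δ ^ c₁)) *
            (M ^ D.card * δ ^ W') ^ 2) := by
          have h0 : (0:ℝ) ≤ εbar * δ ^ (2 * lstar - 1) := by positivity
          refine mul_le_mul_of_nonneg_left ?_ h0
          refine mul_le_mul ?_ hprod2 hQnonneg (by positivity)
          rw [hP1split, hzval]
          exact mul_le_mul_of_nonneg_left hP1 (by positivity)
      _ = M ^ (cS + 2 * D.card) * (εbar * ρbar *
            δ ^ (2 * lstar - 1 + ((2 * (lstar - ℓ (cl jstar)) + 1) + (c₁ + 2 * W')))) := by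
          ring
      _ ≤ M ^ B * (εbar * ρbar *
            δ ^ (2 * lstar - 1 + ((2 * (lstar - ℓ (cl jstar)) + 1) + (c₁ + 2 * W')))) := by
          refine mul_le_mul_of_nonneg_right (pow_le_pow_right₀ hM1 ?_) (by positivity)
          omega
      _ = M ^ B * εbar * ρbar * δ ^ (N + 2 * ((lstar : ℤ) - (ℓ (cl jstar) : ℤ))) := by
          rw [hδN _ _ hE]; ring
  -- Case (iii)
  · intro hclne
    have hne : jstar ≠ i₀ := fun h => hclne (by rw [h])
    have hjS : jstar ∈ Finset.univ.erase i₀ :=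
      Finset.mem_erase.mpr ⟨hne, Finset.mem_univ _⟩
    have hP1split : (∏ m ∈ Finset.univ.erase i₀, ‖x m - z‖)
        = ‖x jstar - z‖ *
          ∏ m ∈ (Finset.univ.erase i₀).erase jstar, ‖x m - z‖ :=
      (Finset.mul_prod_erase _ _ hjS).symm
    have hzval : ‖x jstar - z‖ = ρbar * δ ^ (2 * (lstar - ℓ (cl jstar)) + 1) := by
      rw [norm_sub_rev, hz]
    have hP1 := hprod1 ((Finset.univ.erase i₀).erase jstar) (Finset.notMem_erase _ _)
    have hfe : ((Finset.univ.erase i₀).erase jstar).filter (fun m => cl m = cl jstar)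
        = (Finset.univ.filter fun m => cl m = cl jstar).erase jstar := by
      have hni : (Finset.univ.filter fun m => cl m = cl jstar).erase i₀
          = (Finset.univ.filter fun m => cl m = cl jstar) :=
        Finset.erase_eq_of_notMem (fun h => hclne (Finset.mem_filter.mp h).2)
      rw [Finset.filter_erase, hSs (cl jstar), hni]
    have hc₁ : (((Finset.univ.erase i₀).erase jstar).filter (fun m => cl m = cl jstar)).card
        = ℓ (cl jstar) - 1 := by
      rw [hfe, Finset.card_erase_of_mem (by simp), hcard]
    set c₁ := (((Finset.univ.erase i₀).erase jstar).filter (fun m => cl m = cl jstar)).card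
    set W' := (D.filter fun p => cl p.1 = cl p.2).card with hW'def
    set cS := ((Finset.univ.erase i₀).erase jstar).card with hcSdef
    have hcSn : cS ≤ n := by
      calc cS ≤ (Finset.univ.erase i₀).card := Finset.card_erase_le
        _ ≤ (Finset.univ : Finset (Fin n)).card := Finset.card_erase_le
        _ = n := by simp
    have hlι : ℓ (cl i₀) ≤ lstar := hlstar ▸ Finset.le_sup (Finset.mem_univ _)
    have hlι1 : 1 ≤ ℓ (cl i₀) := hℓ _
    have hlμ1 : 1 ≤ ℓ (cl jstar) := hℓ _
    have hE : ((2 * lstar - 1 + ((2 * (lstar - ℓ (cl jstar)) + 1) + (c₁ + 2 * W')) : ℕ) : ℤ)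
        = N + 2 * ((lstar : ℤ) - (ℓ (cl i₀) : ℤ)) + 1 := by
      omega
    calc (εbar * δ ^ (2 * lstar - 1)) *
        ((∏ m ∈ Finset.univ.erase i₀, ‖x m - z‖) *
          ∏ p ∈ D, ‖x p.2 - x p.1‖ ^ 2)
        ≤ (εbar * δ ^ (2 * lstar - 1)) *
          ((ρbar * δ ^ (2 * (lstar - ℓ (cl jstar)) + 1) * (M ^ cS * δ ^ c₁)) *
            (M ^ D.card * δ ^ W') ^ 2) := by
          have h0 : (0:ℝ) ≤ εbar * δ ^ (2 * lstar - 1) := by positivity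
          refine mul_le_mul_of_nonneg_left ?_ h0
          refine mul_le_mul ?_ hprod2 hQnonneg (by positivity)
          rw [hP1split, hzval]
          exact mul_le_mul_of_nonneg_left hP1 (by positivity)
      _ = M ^ (cS + 2 * D.card) * (εbar * ρbar *
            δ ^ (2 * lstar - 1 + ((2 * (lstar - ℓ (cl jstar)) + 1) + (c₁ + 2 * W')))) := by
          ring
      _ ≤ M ^ B * (εbar * ρbar *
            δ ^ (2 * lstar - 1 + ((2 * (lstar - ℓ (cl jstar)) + 1) + (c₁ + 2 * W')))) := by
          refine mul_le_mul_of_nonneg_right (pow_le_pow_right₀ hM1 ?_) (by positivity)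
          omega
      _ = M ^ B * εbar * ρbar * δ ^ (N + 2 * ((lstar : ℤ) - (ℓ (cl i₀) : ℤ)) + 1) := by
          rw [hδN _ _ hE]; ring
end

section
/- Fix integers n ≥ 2, ζ ≥ 1 and cluster sizes ℓ_1,…,ℓ_ζ ≥ 1 with ℓ_1+…+ℓ_ζ = n and ℓ* = max_s ℓ_s, and fix τ > 1, η > 1, T > 0. Then there exists C > 0, depending only on these fixed parameters and not on δ, such that the following holds. Let x_1,…,x_n on the unit circle form an (n,ζ,δ,τ,η,T)-clustered configuration with clusters of sizes ℓ_1,…,ℓ_ζ (0 < δ < 1, τδ < T), and let x̃_1,…,x̃_n ∈ ℂ satisfy |x̃_j − x_j| ≤ ρ̄ δ^{2(ℓ*−ℓ_{(j)})+1} for every j, where ℓ_{(j)} is the size of the cluster containing j and 0 < ρ̄ < (1/3)·min(1, ηT). Then the x̃_j are pairwise distinct, the Vandermonde matrix Ṽ with entries Ṽ_{k,j} = x̃_j^k (0 ≤ k ≤ n−1) is invertible, and for every j ∈ {1,…,n} and every vector b ∈ ℂ^n: |(Ṽ^{−1} b)_j| ≤ C δ^{1−ℓ_{(j)}} · max_{0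 ≤ i ≤ n−1} |b_i|. -/
open Matrix

open Polynomial in
lemma abs_coeff_mul_X_sub_C_sum (P : ℂ[X]) (r : ℂ) (N : ℕ) (hdeg : P.natDegree ≤ N) :
    ∑ k ∈ Finset.range (N + 2), ‖(P * (X - C r)).coeff k‖
      ≤ (∑ k ∈ Finset.range (N + 1), ‖P.coeff k‖) * (1 + ‖r‖) := by
  have htop : P.coeff (N + 1) = 0 := coeff_eq_zero_of_natDegree_lt (by omega)
  rw [show N + 2 = (N + 1) + 1 from rfl, Finset.sum_range_succ']
  have h0 : ‖(P * (X - C r)).coeff 0‖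
      = ‖P.coeff 0‖ * ‖r‖ := by
    rw [mul_coeff_zero]; simp
  have hstep : ∀ k, ‖(P * (X - C r)).coeff (k + 1)‖
      ≤ ‖P.coeff k‖ + ‖P.coeff (k+1)‖ * ‖r‖ := by
    intro k
    rw [coeff_mul_X_sub_C]
    refine le_trans (norm_sub_le _ _) ?_
    rw [norm_mul]
  refine le_trans (add_le_add (Finset.sum_le_sum fun k _ => hstep k) h0.le) ?_
  rw [Finset.sum_add_distrib, ← Finset.sum_mul]
  have heq : ∑ k ∈ Finset.range (N+1), ‖P.coeff (k+1)‖
      = ∑ k ∈ Finset.range (N+1), ‖P.coeff k‖ - ‖P.coeff 0‖ := by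
    have h2 : ∑ k ∈ Finset.range (N+1+1), ‖P.coeff k‖
        = ∑ k ∈ Finset.range (N+1), ‖P.coeff (k+1)‖ + ‖P.coeff 0‖ :=
      Finset.sum_range_succ' _ _
    rw [Finset.sum_range_succ, htop, norm_zero, add_zero] at h2
    linarith
  rw [heq]
  apply le_of_eq
  ring

open Polynomial in
lemma natDegree_prod_X_sub_C_le {ι : Type*} (s : Finset ι) (c : ι → ℂ) :
    (∏ m ∈ s, (X - C (c m))).natDegree ≤ s.card := by
  refine le_trans (natDegree_prod_le _ _) ?_
  simp [natDegree_X_sub_C]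

open Polynomial in
lemma abs_coeff_prod_le {ι : Type*} [DecidableEq ι] (s : Finset ι) (c : ι → ℂ) :
    ∑ k ∈ Finset.range (s.card + 1),
      ‖(∏ m ∈ s, (X - C (c m))).coeff k‖
      ≤ ∏ m ∈ s, (1 + ‖c m‖) := by
  induction s using Finset.induction_on with
  | empty => simp
  | insert a s ha ih =>
    have hprod : ∏ m ∈ insert a s, (X - C (c m))
        = (∏ m ∈ s, (X - C (c m))) * (X - C (c a)) := by
      rw [Finset.prod_insert ha, mul_comm]
    rw [hprod, Finset.card_insert_of_notMem ha, Finset.prod_insert ha,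
      mul_comm (1 + ‖c a‖)]
    refine le_trans (abs_coeff_mul_X_sub_C_sum _ _ _ (natDegree_prod_X_sub_C_le s c)) ?_
    have h1 : (0:ℝ) ≤ 1 + ‖c a‖ := by positivity
    exact mul_le_mul_of_nonneg_right ih h1

/-- Proposition 6.1: row-wise bound on the inverse of the perturbed Vandermonde matrix. If
`|x̃_j - x_j| ≤ ρ̄ δ^{2(ℓ*-ℓ_{(j)})+1}` for a clustered configuration, then the `x̃_j` are
pairwise distinct, `Ṽ` is invertible and `|(Ṽ⁻¹ b)_j| ≤ C δ^{1-ℓ_{(j)}} max_i |b_i|`. -/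
theorem prony_vandermonde_inverse_row_bound
    (n ζ : ℕ) (hn : 2 ≤ n) (hζ : 1 ≤ ζ)
    (ℓ : Fin ζ → ℕ) (hℓ : ∀ s, 1 ≤ ℓ s) (hsum : ∑ s, ℓ s = n)
    (lstar : ℕ) (hlstar : lstar = Finset.univ.sup ℓ)
    (τ η T : ℝ) (hτ : 1 < τ) (hη : 1 < η) (hT : 0 < T) :
    ∃ C₁ : ℝ, 0 < C₁ ∧
      ∀ (δ : ℝ) (x xt : Fin n → ℂ) (cl : Fin n → Fin ζ) (ρbar : ℝ),
        0 < δ → δ < 1 → τ * δ < T →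
        (∀ j, ‖x j‖ = 1) →
        Function.Injective x →
        (∀ i j, i ≠ j → cl i = cl j →
          δ ≤ ‖x i - x j‖ ∧ ‖x i - x j‖ ≤ τ * δ) →
        (∀ i j, cl i ≠ cl j →
          T ≤ ‖x i - x j‖ ∧ ‖x i - x j‖ ≤ η * T) →
        (∀ s, (Finset.univ.filter fun j => cl j = s).card = ℓ s) →
        0 < ρbar → ρbar < (1 / 3) * min 1 (η * T) →
        (∀ j, ‖xt j - x j‖ ≤
          ρbar * δ ^ (2 * (lstar - ℓ (cl j)) + 1)) →
        Function.Injective xt ∧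
        IsUnit (Matrix.of fun k j : Fin n => xt j ^ (k : ℕ)).det ∧
        ∀ (j : Fin n) (b : Fin n → ℂ),
          ‖((Matrix.of fun k j : Fin n => xt j ^ (k : ℕ))⁻¹ *ᵥ b) j‖ ≤
            C₁ * δ ^ (1 - (ℓ (cl j) : ℤ)) *
              Finset.univ.sup' ⟨⟨0, by omega⟩, Finset.mem_univ _⟩
                (fun i => ‖b i‖) := by
  classical
  refine ⟨7 ^ (n-1) * (max 1 T⁻¹) ^ (n-1), by positivity, ?_⟩
  intro δ x xt cl ρbar hδ0 hδ1 hτδT hunit hxinj hsame hdiff hcard hρ0 hρlt hpert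
  have hρ3 : ρbar < 1/3 := by
    have h1 : min 1 (η * T) ≤ 1 := min_le_left _ _
    nlinarith
  have hδT : δ < T := by nlinarith
  have hpert' : ∀ m, ‖xt m - x m‖ ≤ ρbar * δ := by
    intro m
    refine le_trans (hpert m) ?_
    have h1 : δ ^ (2 * (lstar - ℓ (cl m)) + 1) ≤ δ ^ 1 :=
      pow_le_pow_of_le_one hδ0.le hδ1.le (by omega)
    rw [pow_one] at h1
    exact mul_le_mul_of_nonneg_left h1 hρ0.le
  have hpd : ρbar * δ ≤ δ / 3 := by nlinarith
  have htri : ∀ i j : Fin n, ‖x i - x j‖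
      ≤ ‖xt i - x i‖ + ‖xt i - xt j‖ + ‖xt j - x j‖ := by
    intro i j
    have h1 : x i - x j = -(xt i - x i) + (xt i - xt j) + (xt j - x j) := by ring
    rw [h1]
    refine le_trans (norm_add_le _ _) ?_
    have h2 := norm_add_le (-(xt i - x i)) (xt i - xt j)
    rw [norm_neg] at h2
    linarith
  have hsepS : ∀ i j : Fin n, i ≠ j → cl i = cl j → δ/3 ≤ ‖xt i - xt j‖ := by
    intro i j hij hc
    have h1 := (hsame i j hij hc).1
    have h2 := hpert' i
    have h3 := hpert' j
    have h4 := htri i j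
    linarith
  have hsepD : ∀ i j : Fin n, cl i ≠ cl j → T/3 ≤ ‖xt i - xt j‖ := by
    intro i j hc
    have h1 := (hdiff i j hc).1
    have h2 := hpert' i
    have h3 := hpert' j
    have h4 := htri i j
    linarith
  have hsep : ∀ i j : Fin n, i ≠ j → 0 < ‖xt i - xt j‖ := by
    intro i j hij
    by_cases hc : cl i = cl j
    · exact lt_of_lt_of_le (by linarith) (hsepS i j hij hc)
    · exact lt_of_lt_of_le (by linarith) (hsepD i j hc)
  have hxtinj : Function.Injective xt := by
    intro i j h
    by_contra hne
    have h1 := hsep i j hne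
    rw [h, sub_self, norm_zero] at h1
    exact lt_irrefl _ h1
  -- the Lagrange-type left inverse
  set V : Matrix (Fin n) (Fin n) ℂ := Matrix.of fun k j : Fin n => xt j ^ (k : ℕ) with hV
  set P : Fin n → Polynomial ℂ :=
    fun j => ∏ m ∈ Finset.univ.erase j, (Polynomial.X - Polynomial.C (xt m)) with hPdef
  set d : Fin n → ℂ := fun j => ∏ m ∈ Finset.univ.erase j, (xt j - xt m) with hddef
  have hd0 : ∀ j, d j ≠ 0 := by
    intro j
    refine Finset.prod_ne_zero_iff.mpr ?_
    intro m hm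
    have : j ≠ m := fun h => (Finset.ne_of_mem_erase hm) h.symm
    exact sub_ne_zero.mpr (fun h => this (hxtinj h))
  have hcerase : ∀ j : Fin n, (Finset.univ.erase j).card = n - 1 := by
    intro j
    rw [Finset.card_erase_of_mem (Finset.mem_univ j), Finset.card_univ, Fintype.card_fin]
  have hdegP : ∀ j, (P j).natDegree < n := by
    intro j
    refine lt_of_le_of_lt (natDegree_prod_X_sub_C_le _ _) ?_
    rw [hcerase]; omega
  set W : Matrix (Fin n) (Fin n) ℂ := Matrix.of fun j k : Fin n => (d j)⁻¹ * (P j).coeff k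
    with hWdef
  have hWV : W * V = 1 := by
    ext j j'
    rw [Matrix.mul_apply, Matrix.one_apply]
    have hsum' : ∑ k : Fin n, W j k * V k j' = (d j)⁻¹ * (P j).eval (xt j') := by
      rw [Polynomial.eval_eq_sum_range' (hdegP j), Finset.mul_sum,
        ← Fin.sum_univ_eq_sum_range]
      refine Finset.sum_congr rfl ?_
      intro k _
      simp only [hWdef, hV, Matrix.of_apply]
      ring
    rw [hsum']
    have hevalP : (P j).eval (xt j')
        = ∏ m ∈ Finset.univ.erase j, (xt j' - xt m) := by
      simp [hPdef, Polynomial.eval_prod]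
    by_cases hjj : j = j'
    · subst hjj
      rw [if_pos rfl, hevalP]
      exact inv_mul_cancel₀ (hd0 j)
    · rw [if_neg hjj, hevalP]
      have hz : ∏ m ∈ Finset.univ.erase j, (xt j' - xt m) = 0 :=
        Finset.prod_eq_zero (i := j')
          (Finset.mem_erase.mpr ⟨fun h => hjj h.symm, Finset.mem_univ _⟩) (sub_self _)
      rw [hz, mul_zero]
  have hdet : IsUnit V.det := Matrix.isUnit_det_of_left_inverse hWV
  have hinv : V⁻¹ = W := Matrix.inv_eq_left_inv hWV
  refine ⟨hxtinj, hdet, ?_⟩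
  intro j b
  set M : ℝ := Finset.univ.sup' ⟨⟨0, by omega⟩, Finset.mem_univ _⟩
    (fun i => ‖b i‖) with hMdef
  have hbM : ∀ i, ‖b i‖ ≤ M := fun i =>
    Finset.le_sup' (fun i => ‖b i‖) (Finset.mem_univ i)
  have hM0 : 0 ≤ M := le_trans (norm_nonneg _) (hbM ⟨0, by omega⟩)
  -- the coefficient sum bound
  have hcoefsum : ∑ k : Fin n, ‖(P j).coeff k‖ ≤ (7/3 : ℝ) ^ (n-1) := by
    have h1 : ∑ k : Fin n, ‖(P j).coeff k‖
        = ∑ k ∈ Finset.range n, ‖(P j).coeff k‖ :=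
      Fin.sum_univ_eq_sum_range (fun k => ‖(P j).coeff k‖) n
    have h2 := abs_coeff_prod_le (Finset.univ.erase j) xt
    rw [hcerase j, show n - 1 + 1 = n by omega] at h2
    refine le_trans (h1.le.trans h2) ?_
    have h3 : ∀ m ∈ Finset.univ.erase j, 1 + ‖xt m‖ ≤ (7/3 : ℝ) := by
      intro m _
      have h4 := hpert' m
      have h5 : ‖xt m‖ ≤ ‖x m‖ + ‖xt m - x m‖ := by
        have h6 := norm_add_le (x m) (xt m - x m)
        rwa [show x m + (xt m - x m) = xt m by ring] at h6
      rw [hunit m] at h5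
      nlinarith
    refine le_trans (Finset.prod_le_prod (fun m _ => by positivity) h3) ?_
    rw [Finset.prod_const, hcerase j]
  -- the denominator lower bound
  set A : ℕ := ℓ (cl j) - 1 with hAdef
  set B : ℕ := n - ℓ (cl j) with hBdef
  have hℓn : ℓ (cl j) ≤ n := by
    rw [← hsum]
    exact Finset.single_le_sum (f := ℓ) (fun s _ => Nat.zero_le _) (Finset.mem_univ _)
  have hA : ((Finset.univ.erase j).filter fun m => cl m = cl j).card = A := by
    have hjmem : j ∈ Finset.univ.filter (fun m => cl m = cl j) :=
      Finset.mem_filter.mpr ⟨Finset.mem_univ _, rfl⟩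
    rw [Finset.filter_erase, Finset.card_erase_of_mem hjmem, hcard]
  have hB : ((Finset.univ.erase j).filter fun m => ¬ cl m = cl j).card = B := by
    have h1 := Finset.card_filter_add_card_filter_not
      (s := Finset.univ.erase j) (p := fun m => cl m = cl j)
    rw [hA, hcerase j] at h1
    have h2 := hℓn
    have h3 := hℓ (cl j)
    omega
  have hAB : A + B = n - 1 := by
    have := hℓ (cl j); omega
  have hdlow : (δ/3) ^ A * (T/3) ^ B ≤ ‖d j‖ := by
    rw [hddef]
    simp only
    rw [norm_prod]
    have hsplit : ∏ m ∈ Finset.univ.erase j,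
        (if cl m = cl j then δ/3 else T/3) = (δ/3) ^ A * (T/3) ^ B := by
      rw [Finset.prod_ite, Finset.prod_const, Finset.prod_const, hA, hB]
    rw [← hsplit]
    refine Finset.prod_le_prod ?_ ?_
    · intro m _
      by_cases hc : cl m = cl j <;> simp [hc] <;> positivity
    · intro m hm
      have hmj : j ≠ m := fun h => Finset.ne_of_mem_erase hm h.symm
      by_cases hc : cl m = cl j
      · rw [if_pos hc]
        exact hsepS j m hmj hc.symm
      · rw [if_neg hc]
        exact hsepD j m (fun h => hc h.symm)
  have hdpos : 0 < ‖d j‖ :=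
    lt_of_lt_of_le (by positivity) hdlow
  -- main estimate
  rw [hinv]
  have hmv : (W *ᵥ b) j = ∑ k : Fin n, W j k * b k := by
    simp [Matrix.mulVec, dotProduct]
  rw [hmv]
  have habs : ‖∑ k : Fin n, W j k * b k‖
      ≤ (‖d j‖)⁻¹ * (∑ k : Fin n, ‖(P j).coeff k‖) * M := by
    refine le_trans (norm_sum_le _ _) ?_
    have h1 : ∀ k : Fin n, ‖W j k * b k‖
        ≤ (‖d j‖)⁻¹ * ‖(P j).coeff k‖ * M := by
      intro k
      rw [norm_mul]
      have h2 : ‖W j k‖ = (‖d j‖)⁻¹ * ‖(P j).coeff k‖ := by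
        simp only [hWdef, Matrix.of_apply, norm_mul, norm_inv]
      rw [h2]
      refine mul_le_mul_of_nonneg_left (hbM k) ?_
      positivity
    refine le_trans (Finset.sum_le_sum fun k _ => h1 k) ?_
    rw [← Finset.sum_mul, ← Finset.mul_sum]
  refine le_trans habs ?_
  -- now plug in numeric bounds
  have hstep1 : (‖d j‖)⁻¹ * (∑ k : Fin n, ‖(P j).coeff k‖)
      ≤ ((δ/3) ^ A * (T/3) ^ B)⁻¹ * (7/3 : ℝ) ^ (n-1) := by
    have hs0 : (0:ℝ) ≤ ∑ k : Fin n, ‖(P j).coeff k‖ :=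
      Finset.sum_nonneg fun k _ => norm_nonneg _
    refine mul_le_mul ?_ hcoefsum hs0 (by positivity)
    exact inv_anti₀ (by positivity) hdlow
  have hzpow : (δ : ℝ) ^ (1 - (ℓ (cl j) : ℤ)) = (δ ^ A)⁻¹ := by
    have h1 : (1 - (ℓ (cl j) : ℤ)) = -(A : ℤ) := by
      have := hℓ (cl j)
      omega
    rw [h1, _root_.zpow_neg, _root_.zpow_natCast]
  have hstep2 : ((δ/3) ^ A * (T/3) ^ B)⁻¹ * (7/3 : ℝ) ^ (n-1)
      ≤ 7 ^ (n-1) * (max 1 T⁻¹) ^ (n-1) * (δ ^ A)⁻¹ := by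
    have e1 : ((δ/3) ^ A * (T/3) ^ B)⁻¹ * (7/3 : ℝ) ^ (n-1)
        = 7 ^ (n-1) * ((3:ℝ) ^ (A+B) / 3 ^ (n-1) * (T⁻¹) ^ B) * (δ ^ A)⁻¹ := by
      rw [div_pow, div_pow, div_pow, mul_inv, inv_div, inv_div]
      field_simp
      have hTT : T ^ B * T⁻¹ ^ B = 1 := by rw [← mul_pow, mul_inv_cancel₀ hT.ne', one_pow]
      rw [one_div]
      linear_combination (-(3:ℝ) ^ (A + B)) * hTT
    rw [e1]
    refine mul_le_mul_of_nonneg_right ?_ (by positivity)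
    refine mul_le_mul_of_nonneg_left ?_ (by positivity)
    rw [hAB]
    rw [div_self (by positivity), one_mul]
    calc (T⁻¹) ^ B ≤ (max 1 T⁻¹) ^ B := by
          refine pow_le_pow_left₀ (by positivity) (le_max_right _ _) B
      _ ≤ (max 1 T⁻¹) ^ (n-1) := by
          refine pow_le_pow_right₀ (le_max_left _ _) (by omega)
  calc (‖d j‖)⁻¹ * (∑ k : Fin n, ‖(P j).coeff k‖) * M
      ≤ ((δ/3) ^ A * (T/3) ^ B)⁻¹ * (7/3 : ℝ) ^ (n-1) * M :=
        mul_le_mul_of_nonneg_right hstep1 hM0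
    _ ≤ 7 ^ (n-1) * (max 1 T⁻¹) ^ (n-1) * (δ ^ A)⁻¹ * M :=
        mul_le_mul_of_nonneg_right hstep2 hM0
    _ = 7 ^ (n-1) * (max 1 T⁻¹) ^ (n-1) * δ ^ (1 - (ℓ (cl j) : ℤ)) * M := by
        rw [hzpow]
end

section
/- Fix integers n ≥ 2, ζ ≥ 1 and cluster sizes ℓ_1,…,ℓ_ζ ≥ 1 with ℓ_1+…+ℓ_ζ = n and ℓ* = max_s ℓ_s, fix τ > 1, η > 1, T > 0 and K > 0. Then there exist c > 0 and C > 0, depending only on these fixed parameters and not on δ or ε, such that the following holds. Let x_1,…,x_n on the unit circle form an (n,ζ,δ,τ,η,T)-clustered configuration with clusters C_1,…,C_ζ of sizes ℓ_1,…,ℓ_ζ (0 < δ < 1, τδ < T), let 0 < ε ≤ c δ^{2ℓ*−1}, and let x̃_1,…,x̃_n ∈ ℂ be pairwise distinct with |x̃_j − x_j| ≤ K ε δ^{2−2ℓ_{(j)}} for every j, where ℓ_{(j)} is the size of the cluster containing j. Let V and Ṽ be the n×n Vandermonde matrices with entries V_{k,s} = x_s^k and Ṽ_{k,s} = x̃_s^k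 (0 ≤ k ≤ n−1). Then Ṽ is invertible and for all j, s ∈ {1,…,n}, with δ_{j,s} the Kronecker delta: |δ_{j,s} − (Ṽ^{−1}V)_{j,s}| ≤ C ε δ^{1−2ℓ_{(j)}} if s lies in the same cluster as j, and |δ_{j,s} − (Ṽ^{−1}V)_{j,s}| ≤ C ε δ^{2−ℓ_{(j)}−L} if s lies in a different cluster, where L is the maximum cluster size among clusters different from the cluster of j. -/
open Matrix

section PvtAux

open Finset Polynomial

lemma pvt_abs_prod_sub_one_le {ι : Type*} [DecidableEq ι] (s : Finset ι) (f : ι → ℂ) (u : ℝ)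
    (h : ∀ i ∈ s, norm (f i - 1) ≤ u) :
    norm (∏ i ∈ s, f i - 1) ≤ (1 + u) ^ s.card - 1 := by
  induction s using Finset.induction with
  | empty => simp
  | @insert a s ha ih =>
    have hu : 0 ≤ u := le_trans (by positivity) (h a (mem_insert_self a s))
    have h1 : ∀ i ∈ s, norm (f i - 1) ≤ u := fun i hi => h i (mem_insert_of_mem hi)
    have hfa : norm (f a) ≤ 1 + u := by
      calc norm (f a) = norm (1 + (f a - 1)) := by ring_nf
      _ ≤ norm (1:ℂ) + norm (f a - 1) := norm_add_le _ _
      _ ≤ 1 + u := by simpa using h a (mem_insert_self a s)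
    have key : (∏ i ∈ insert a s, f i) - 1 = f a * ((∏ i ∈ s, f i) - 1) + (f a - 1) := by
      rw [Finset.prod_insert ha]; ring
    rw [key, Finset.card_insert_of_notMem ha]
    calc norm (f a * ((∏ i ∈ s, f i) - 1) + (f a - 1))
        ≤ norm (f a) * norm ((∏ i ∈ s, f i) - 1) + norm (f a - 1) := by
          refine le_trans (norm_add_le _ _) ?_
          rw [norm_mul]
      _ ≤ (1 + u) * ((1 + u) ^ s.card - 1) + u := by
          refine add_le_add (mul_le_mul hfa (ih h1) (by positivity) (by positivity)) ?_
          exact h a (mem_insert_self a s)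
      _ = (1 + u) ^ (s.card + 1) - 1 := by ring

lemma pvt_pow_sub_one_le (u : ℝ) (hu : 0 ≤ u) (m : ℕ) :
    (1 + u) ^ m - 1 ≤ m * u * (1 + u) ^ m := by
  induction m with
  | zero => simp
  | succ m ih =>
    have h1 : (1:ℝ) ≤ (1 + u) ^ m := one_le_pow₀ (by linarith)
    rw [pow_succ]
    have key : (1 + u) ^ m * (1 + u) - 1 ≤ ((m:ℝ) + 1) * u * (1 + u) ^ m := by nlinarith [ih]
    have h2 : ((m:ℝ) + 1) * u * (1 + u) ^ m ≤ ((m:ℝ) + 1) * u * ((1 + u) ^ m * (1 + u)) := by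
      nlinarith [mul_nonneg (mul_nonneg (by positivity : (0:ℝ) ≤ (m:ℝ)+1) hu)
        (by positivity : (0:ℝ) ≤ (1+u)^m)]
    push_cast
    linarith

lemma pvt_prod_le_pow {ι : Type*} (s : Finset ι) (f : ι → ℝ) (a : ℝ) (ha : 1 ≤ a)
    (h : ∀ i ∈ s, 0 ≤ f i ∧ f i ≤ a) {m : ℕ} (hm : s.card ≤ m) :
    ∏ i ∈ s, f i ≤ a ^ m := by
  calc ∏ i ∈ s, f i ≤ ∏ _i ∈ s, a :=
        Finset.prod_le_prod (fun i hi => (h i hi).1) (fun i hi => (h i hi).2)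
    _ = a ^ s.card := Finset.prod_const a
    _ ≤ a ^ m := pow_le_pow_right₀ (by linarith) hm

lemma pvt_zpow_sum {ι : Type*} [DecidableEq ι] (a : ℝ) (ha : a ≠ 0) (s : Finset ι) (f : ι → ℤ) :
    ∏ i ∈ s, a ^ f i = a ^ (∑ i ∈ s, f i) := by
  induction s using Finset.induction with
  | empty => simp
  | @insert b s hb ih =>
    rw [Finset.prod_insert hb, Finset.sum_insert hb, ih, zpow_add₀ ha]

lemma pvt_lagrange_eval (n : ℕ) (v : Fin n → ℂ) (hv : Function.Injective v)
    (k : ℕ) (hk : k < n) (z : ℂ) :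
    ∑ j, v j ^ k * (∏ i ∈ univ.erase j, ((z - v i) / (v j - v i))) = z ^ k := by
  have hvs : Set.InjOn v (univ : Finset (Fin n)) := fun a _ b _ h => hv h
  have hdeg : (X ^ k : ℂ[X]).degree < ((univ : Finset (Fin n)).card : ℕ) := by
    rw [degree_X_pow, Finset.card_univ, Fintype.card_fin]
    exact_mod_cast hk
  have hinterp := Lagrange.eq_interpolate hvs hdeg
  have h2 := congrArg (Polynomial.eval z) hinterp
  rw [eval_pow, eval_X, Lagrange.interpolate_apply, eval_finset_sum] at h2
  rw [h2]
  refine Finset.sum_congr rfl fun j _ => ?_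
  rw [eval_mul, eval_C, eval_pow, eval_X, Lagrange.basis, eval_prod]
  congr 1
  refine Finset.prod_congr rfl fun i hi => ?_
  rw [Lagrange.basisDivisor, eval_mul, eval_C, eval_sub, eval_X, eval_C]
  rw [div_eq_inv_mul]

lemma pvt_matrix (n : ℕ) (x xt : Fin n → ℂ) (hxt : Function.Injective xt) :
    IsUnit (Matrix.of fun k j : Fin n => xt j ^ (k : ℕ)).det ∧
    ((Matrix.of fun k j' : Fin n => xt j' ^ (k : ℕ))⁻¹ *
      (Matrix.of fun k j' : Fin n => x j' ^ (k : ℕ))) =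
      Matrix.of (fun j s : Fin n => ∏ i ∈ univ.erase j, ((x s - xt i) / (xt j - xt i))) := by
  have hdet : (Matrix.of fun k j : Fin n => xt j ^ (k : ℕ)).det ≠ 0 := by
    have h : (Matrix.of fun k j : Fin n => xt j ^ (k : ℕ)) = (Matrix.vandermonde xt)ᵀ := by
      ext k j; simp [Matrix.vandermonde]
    rw [h, Matrix.det_transpose]
    exact Matrix.det_vandermonde_ne_zero_iff.mpr hxt
  refine ⟨isUnit_iff_ne_zero.mpr hdet, ?_⟩
  have hVA : (Matrix.of fun k j : Fin n => xt j ^ (k : ℕ)) *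
      Matrix.of (fun j s : Fin n => ∏ i ∈ univ.erase j, ((x s - xt i) / (xt j - xt i))) =
      (Matrix.of fun k j' : Fin n => x j' ^ (k : ℕ)) := by
    ext k s
    simp only [Matrix.mul_apply, Matrix.of_apply]
    exact pvt_lagrange_eval n xt hxt k k.isLt (x s)
  haveI := (Matrix.of fun k j : Fin n => xt j ^ (k : ℕ)).invertibleOfIsUnitDet
    (isUnit_iff_ne_zero.mpr hdet)
  rw [← hVA, Matrix.inv_mul_cancel_left_of_invertible]

end PvtAux
open Finset in
set_option maxHeartbeats 4000000 in
/-- Proposition 6.2: entrywise bound on `I - Ṽ⁻¹V` for a clustered configuration. If the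
perturbed nodes satisfy `|x̃_j - x_j| ≤ K ε δ^{2-2ℓ_{(j)}}` with `ε ≤ c δ^{2ℓ*-1}`, then
`|δ_{j,s} - (Ṽ⁻¹V)_{j,s}| ≤ C ε δ^{1-2ℓ_{(j)}}` for in-cluster `s`, and
`≤ C ε δ^{2-ℓ_{(j)}-L}` otherwise, where `L` is the largest cluster size among the other
clusters. -/
theorem prony_vandermonde_transfer_bound
    (n ζ : ℕ) (hn : 2 ≤ n) (hζ : 1 ≤ ζ)
    (ℓ : Fin ζ → ℕ) (hℓ : ∀ s, 1 ≤ ℓ s) (hsum : ∑ s, ℓ s = n)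
    (lstar : ℕ) (hlstar : lstar = Finset.univ.sup ℓ)
    (τ η T K : ℝ) (hτ : 1 < τ) (hη : 1 < η) (hT : 0 < T) (hK : 0 < K) :
    ∃ c C₁ : ℝ, 0 < c ∧ 0 < C₁ ∧
      ∀ (δ ε : ℝ) (x xt : Fin n → ℂ) (cl : Fin n → Fin ζ),
        0 < δ → δ < 1 → τ * δ < T →
        (∀ j, norm (x j) = 1) →
        Function.Injective x →
        (∀ i j, i ≠ j → cl i = cl j →
          δ ≤ norm (x i - x j) ∧ norm (x i - x j) ≤ τ * δ) →
        (∀ i j, cl i ≠ cl j →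
          T ≤ norm (x i - x j) ∧ norm (x i - x j) ≤ η * T) →
        (∀ s, (Finset.univ.filter fun j => cl j = s).card = ℓ s) →
        0 < ε → ε ≤ c * δ ^ (2 * lstar - 1) →
        Function.Injective xt →
        (∀ j, norm (xt j - x j) ≤
          K * ε * δ ^ (2 - 2 * (ℓ (cl j) : ℤ))) →
        IsUnit (Matrix.of fun k j : Fin n => xt j ^ (k : ℕ)).det ∧
        ∀ j s : Fin n,
          (cl s = cl j →
            norm ((if j = s then (1 : ℂ) else 0) -
                (((Matrix.of fun k j' : Fin n => xt j' ^ (k : ℕ))⁻¹ *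
                  (Matrix.of fun k j' : Fin n => x j' ^ (k : ℕ))) j s)) ≤
              C₁ * ε * δ ^ (1 - 2 * (ℓ (cl j) : ℤ))) ∧
          (cl s ≠ cl j →
            norm ((if j = s then (1 : ℂ) else 0) -
                (((Matrix.of fun k j' : Fin n => xt j' ^ (k : ℕ))⁻¹ *
                  (Matrix.of fun k j' : Fin n => x j' ^ (k : ℕ))) j s)) ≤
              C₁ * ε * δ ^ (2 - (ℓ (cl j) : ℤ) -
                (((Finset.univ.filter fun a => a ≠ cl j).sup ℓ : ℕ) : ℤ))) := by
  -- constants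
  set B : ℝ := 2*(τ+1) + 6/T + 6 with hBdef
  set B₂ : ℝ := B + 2*K/T + 2*(τ+1)/T + 1 with hB₂def
  have h6T : (0:ℝ) ≤ 6/T := div_nonneg (by norm_num) hT.le
  have h2KT : (0:ℝ) ≤ 2*K/T := div_nonneg (by linarith) hT.le
  have hτT : (0:ℝ) ≤ 2*(τ+1)/T := div_nonneg (by linarith) hT.le
  have hB1 : (1:ℝ) ≤ B := by rw [hBdef]; linarith
  have hB₂1 : (1:ℝ) ≤ B₂ := by rw [hB₂def]; linarith
  have hBn : (1:ℝ) ≤ B ^ n := one_le_pow₀ hB1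
  have hB₂n : (1:ℝ) ≤ B₂ ^ n := one_le_pow₀ hB₂1
  have h2n : (0:ℝ) ≤ 2*K*n*2^n :=
    mul_nonneg (mul_nonneg (by linarith) (Nat.cast_nonneg n)) (by positivity)
  have hKBn : (0:ℝ) ≤ 2*K*B^n := mul_nonneg (by linarith) (by linarith)
  refine ⟨1/(100*K), 2*K*n*2^n + 2*K*B^n + B₂^n, by positivity, by linarith, ?_⟩
  intro δ ε x xt cl hδ0 hδ1 hτδT hcirc hxinj hclose hfar hcardℓ hε0 hεc hxtinj hpert
  have hδne : δ ≠ 0 := ne_of_gt hδ0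
  have hδle1 : δ ≤ 1 := le_of_lt hδ1
  have hδT : δ < T := by nlinarith
  have hmono : ∀ a b : ℤ, a ≤ b → δ ^ b ≤ δ ^ a :=
    fun a b h => zpow_le_zpow_right_of_le_one₀ hδ0 hδle1 h
  have hzp : ∀ z : ℤ, (0:ℝ) < δ ^ z := fun z => zpow_pos hδ0 z
  -- lstar facts
  have hl : ∀ i : Fin ζ, (ℓ i : ℤ) ≤ (lstar : ℤ) := by
    intro i
    have : ℓ i ≤ lstar := hlstar ▸ Finset.le_sup (mem_univ i)
    exact_mod_cast this
  have hlstar1 : 1 ≤ lstar := by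
    have h0 : (⟨0, hζ⟩ : Fin ζ) = ⟨0, hζ⟩ := rfl
    have := hℓ ⟨0, hζ⟩
    have h2 : ℓ ⟨0, hζ⟩ ≤ lstar := hlstar ▸ Finset.le_sup (mem_univ _)
    omega
  -- the perturbation radii are at most δ/100
  have hεle : ∀ i : Fin ζ, K * ε * δ ^ (2 - 2*(ℓ i : ℤ)) ≤ δ/100 := by
    intro i
    have hcast : ((2*lstar - 1 : ℕ) : ℤ) = 2*(lstar:ℤ) - 1 := by omega
    have h1 : K * ε ≤ K * ((1/(100*K)) * δ ^ ((2*lstar - 1 : ℕ) : ℤ)) := by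
      rw [zpow_natCast]
      exact mul_le_mul_of_nonneg_left hεc hK.le
    have h2 : K * ((1/(100*K)) * δ ^ ((2*lstar - 1 : ℕ) : ℤ)) =
        (1/100) * δ ^ ((2*lstar - 1 : ℕ) : ℤ) := by
      field_simp
    have h3 : K * ε * δ ^ (2 - 2*(ℓ i : ℤ)) ≤
        (1/100) * (δ ^ ((2*lstar - 1 : ℕ) : ℤ) * δ ^ (2 - 2*(ℓ i : ℤ))) := by
      have := mul_le_mul_of_nonneg_right (h2 ▸ h1) (hzp (2 - 2*(ℓ i : ℤ))).le
      linarith [this]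
    have h4 : δ ^ ((2*lstar - 1 : ℕ) : ℤ) * δ ^ (2 - 2*(ℓ i : ℤ)) =
        δ ^ (((2*lstar - 1 : ℕ) : ℤ) + (2 - 2*(ℓ i : ℤ))) := (zpow_add₀ hδne _ _).symm
    have h5 : δ ^ (((2*lstar - 1 : ℕ) : ℤ) + (2 - 2*(ℓ i : ℤ))) ≤ δ ^ (1:ℤ) := by
      refine hmono _ _ ?_
      have := hl i
      omega
    rw [h4] at h3
    calc K * ε * δ ^ (2 - 2*(ℓ i : ℤ)) ≤ (1/100) * δ ^ (((2*lstar - 1 : ℕ) : ℤ) + (2 - 2*(ℓ i : ℤ))) := h3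
      _ ≤ (1/100) * δ ^ (1:ℤ) := by linarith [h5]
      _ = δ/100 := by rw [zpow_one]; ring
  have hrle : ∀ i, norm (xt i - x i) ≤ δ/100 := fun i => (hpert i).trans (hεle (cl i))
  have habs_sub3 : ∀ a b : ℂ, norm (a - b) ≤ norm a + norm b := by
    intro a b
    calc norm (a - b) ≤ norm a + norm (-b) := by
          simpa [sub_eq_add_neg] using norm_add_le a (-b)
      _ = norm a + norm b := by rw [norm_neg]
  have hxsep : ∀ i i', i ≠ i' → δ ≤ norm (x i - x i') := by
    intro i i' h
    by_cases hc : cl i = cl i'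
    · exact (hclose i i' h hc).1
    · exact le_trans hδT.le (hfar i i' hc).1
  have htri : ∀ i i' : Fin n,
      norm (x i - x i') ≤ norm (xt i - xt i') + δ/100 + δ/100 := by
    intro i i'
    have hrw : x i - x i' = ((xt i - xt i') - (xt i - x i)) + (xt i' - x i') := by ring
    rw [hrw]
    calc norm (((xt i - xt i') - (xt i - x i)) + (xt i' - x i'))
        ≤ norm ((xt i - xt i') - (xt i - x i)) + norm (xt i' - x i') :=
          norm_add_le _ _
      _ ≤ (norm (xt i - xt i') + norm (xt i - x i)) + norm (xt i' - x i') := by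
          linarith [habs_sub3 (xt i - xt i') (xt i - x i)]
      _ ≤ norm (xt i - xt i') + δ/100 + δ/100 := by
          linarith [hrle i, hrle i']
  have htsepδ : ∀ i i', i ≠ i' → δ/2 ≤ norm (xt i - xt i') := by
    intro i i' h
    have h1 := htri i i'
    have h2 := hxsep i i' h
    linarith
  have htsepT : ∀ i i', cl i ≠ cl i' → T/2 ≤ norm (xt i - xt i') := by
    intro i i' h
    have h1 := htri i i'
    have h2 := (hfar i i' h).1
    linarith
  have hxtabs : ∀ i, norm (xt i) ≤ 2 := by
    intro i
    have hrw : xt i = (xt i - x i) + x i := by ring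
    rw [hrw]
    calc norm ((xt i - x i) + x i) ≤ norm (xt i - x i) + norm (x i) :=
        norm_add_le _ _
      _ ≤ 2 := by rw [hcirc i]; linarith [hrle i]
  have hnum3 : ∀ s' i : Fin n, norm (x s' - xt i) ≤ 3 := by
    intro s' i
    calc norm (x s' - xt i) ≤ norm (x s') + norm (xt i) := habs_sub3 _ _
      _ ≤ 3 := by rw [hcirc s']; linarith [hxtabs i]
  have hnum_same : ∀ s' i : Fin n, i ≠ s' → cl i = cl s' →
      norm (x s' - xt i) ≤ (τ+1)*δ := by
    intro s' i h hc
    have hrw : x s' - xt i = (x s' - x i) - (xt i - x i) := by ring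
    rw [hrw]
    calc norm ((x s' - x i) - (xt i - x i))
        ≤ norm (x s' - x i) + norm (xt i - x i) := habs_sub3 _ _
      _ ≤ τ*δ + δ/100 := by
          refine add_le_add ?_ (hrle i)
          rw [norm_sub_rev]
          exact (hclose i s' h hc).2
      _ ≤ (τ+1)*δ := by nlinarith
  have hratio : ∀ (a b : ℂ) (N D : ℝ), 0 < D → norm a ≤ N → D ≤ norm b →
      norm (a / b) ≤ N / D := by
    intro a b N D hD ha hb
    rw [norm_div]
    exact div_le_div₀ (le_trans (norm_nonneg a) ha) ha hD hb
  -- matrix identity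
  obtain ⟨hdet, hA⟩ := pvt_matrix n x xt hxtinj
  refine ⟨hdet, ?_⟩
  intro j s
  rw [hA]
  simp only [Matrix.of_apply]
  have hεδ : ∀ z : ℤ, (0:ℝ) ≤ ε * δ ^ z := fun z => mul_nonneg hε0.le (hzp z).le
  constructor
  · -- same cluster
    intro hcs
    by_cases hjs : j = s
    · -- diagonal entry
      subst hjs
      simp only [if_pos rfl]
      set u : ℝ := 2*(K*ε*δ^(1 - 2*(ℓ (cl j):ℤ))) with hu_def
      have hu0 : 0 ≤ u := by
        rw [hu_def]
        have := hεδ (1 - 2*(ℓ (cl j):ℤ))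
        nlinarith [hK.le, hε0.le, (hzp (1 - 2*(ℓ (cl j):ℤ))).le]
      have hsplit : K * ε * δ ^ (2 - 2*(ℓ (cl j):ℤ)) = (K*ε*δ^(1 - 2*(ℓ (cl j):ℤ))) * δ := by
        rw [show (2 - 2*(ℓ (cl j):ℤ)) = (1 - 2*(ℓ (cl j):ℤ)) + 1 by ring,
          zpow_add_one₀ hδne]
        ring
      have hfac : ∀ i ∈ univ.erase j,
          norm ((x j - xt i)/(xt j - xt i) - 1) ≤ u := by
        intro i hi
        have hij : i ≠ j := (Finset.mem_erase.mp hi).1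
        have hden : δ/2 ≤ norm (xt j - xt i) := htsepδ j i (Ne.symm hij)
        have hdne : xt j - xt i ≠ 0 := by
          intro hcon
          rw [hcon, norm_zero] at hden
          linarith
        rw [div_sub_one hdne]
        have hnum : x j - xt i - (xt j - xt i) = -(xt j - x j) := by ring
        rw [hnum]
        have h1 : norm (-(xt j - x j)) ≤ K * ε * δ ^ (2 - 2*(ℓ (cl j):ℤ)) := by
          rw [norm_neg]; exact hpert j
        refine (hratio _ _ _ _ (by linarith) h1 hden).trans ?_
        rw [hsplit, hu_def]
        rw [div_le_iff₀ (by linarith : (0:ℝ) < δ/2)]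
        nlinarith [hεδ (1 - 2*(ℓ (cl j):ℤ)), hK.le]
      have hmain := pvt_abs_prod_sub_one_le (univ.erase j) _ u hfac
      rw [Finset.card_erase_of_mem (mem_univ j), Finset.card_univ, Fintype.card_fin] at hmain
      have hu1 : u ≤ 1 := by
        have h := hεle (cl j)
        rw [hsplit] at h
        have h2 : K*ε*δ^(1 - 2*(ℓ (cl j):ℤ)) ≤ 1/100 :=
          le_of_mul_le_mul_right (by linarith) hδ0
        rw [hu_def]; linarith
      have h2 := pvt_pow_sub_one_le u hu0 (n-1)
      have h3 : (1 + u)^(n-1) ≤ 2^n := by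
        calc (1+u)^(n-1) ≤ 2^(n-1) := pow_le_pow_left₀ (by linarith) (by linarith) _
          _ ≤ (2:ℝ)^n := pow_le_pow_right₀ (by norm_num) (Nat.sub_le n 1)
      have h4 : ((n-1:ℕ):ℝ) ≤ (n:ℝ) := by exact_mod_cast Nat.sub_le n 1
      have h5 : ((n-1:ℕ):ℝ) * u * (1+u)^(n-1) ≤ (n:ℝ) * u * 2^n := by
        refine mul_le_mul ?_ h3 (by positivity) ?_
        · exact mul_le_mul_of_nonneg_right h4 hu0
        · exact mul_nonneg (Nat.cast_nonneg n) hu0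
      rw [norm_sub_rev]
      calc norm ((∏ i ∈ univ.erase j, ((x j - xt i)/(xt j - xt i))) - 1)
          ≤ (1+u)^(n-1) - 1 := hmain
        _ ≤ ((n-1:ℕ):ℝ) * u * (1+u)^(n-1) := h2
        _ ≤ (n:ℝ) * u * 2^n := h5
        _ = (2*K*(n:ℝ)*2^n) * (ε * δ^(1 - 2*(ℓ (cl j):ℤ))) := by rw [hu_def]; ring
        _ ≤ (2*K*(n:ℝ)*2^n + 2*K*B^n + B₂^n) * (ε * δ^(1 - 2*(ℓ (cl j):ℤ))) := by
            refine mul_le_mul_of_nonneg_right (by linarith) (hεδ _)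
        _ = (2*K*(n:ℝ)*2^n + 2*K*B^n + B₂^n) * ε * δ^(1 - 2*(ℓ (cl j):ℤ)) := by ring
    · -- off-diagonal, same cluster
      simp only [if_neg hjs]
      have hsj : s ≠ j := fun h => hjs h.symm
      have hsmem : s ∈ univ.erase j := Finset.mem_erase.mpr ⟨hsj, mem_univ s⟩
      rw [zero_sub, norm_neg, norm_prod, ← Finset.mul_prod_erase _ _ hsmem]
      have h1 : norm ((x s - xt s)/(xt j - xt s)) ≤
          2*(K*ε*δ^(1 - 2*(ℓ (cl j):ℤ))) := by
        have hden : δ/2 ≤ norm (xt j - xt s) := htsepδ j s (Ne.symm hsj)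
        have hnum : norm (x s - xt s) ≤ K * ε * δ ^ (2 - 2*(ℓ (cl j):ℤ)) := by
          rw [norm_sub_rev, ← hcs]
          exact hpert s
        refine (hratio _ _ _ _ (by linarith) hnum hden).trans ?_
        have hsplit : K * ε * δ ^ (2 - 2*(ℓ (cl j):ℤ)) = (K*ε*δ^(1 - 2*(ℓ (cl j):ℤ))) * δ := by
          rw [show (2 - 2*(ℓ (cl j):ℤ)) = (1 - 2*(ℓ (cl j):ℤ)) + 1 by ring,
            zpow_add_one₀ hδne]
          ring
        rw [hsplit, div_le_iff₀ (by linarith : (0:ℝ) < δ/2)]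
        nlinarith [hεδ (1 - 2*(ℓ (cl j):ℤ)), hK.le]
      have h2 : ∏ i ∈ (univ.erase j).erase s, norm ((x s - xt i)/(xt j - xt i)) ≤
          B ^ n := by
        refine pvt_prod_le_pow _ _ _ hB1 ?_ ?_
        · intro i hi
          have his : i ≠ s := (Finset.mem_erase.mp hi).1
          have hij : i ≠ j := (Finset.mem_erase.mp (Finset.mem_erase.mp hi).2).1
          refine ⟨norm_nonneg _, ?_⟩
          by_cases hci : cl i = cl j
          · have hn' := hnum_same s i his (by rw [hci, hcs])
            have hd := htsepδ j i (Ne.symm hij)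
            refine (hratio _ _ _ _ (by linarith) hn' hd).trans ?_
            have heq : (τ+1)*δ/(δ/2) = 2*(τ+1) := by field_simp
            rw [heq, hBdef]; linarith
          · have hd := htsepT j i (fun h => hci h.symm)
            refine (hratio _ _ _ _ (by linarith) (hnum3 s i) hd).trans ?_
            have heq : (3:ℝ)/(T/2) = 6/T := by field_simp; ring
            rw [heq, hBdef]; linarith
        · calc ((univ.erase j).erase s).card ≤ (univ : Finset (Fin n)).card :=
              Finset.card_le_card (fun i _ => mem_univ i)
            _ = n := by rw [Finset.card_univ, Fintype.card_fin]
      calc norm ((x s - xt s)/(xt j - xt s)) *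
            ∏ i ∈ (univ.erase j).erase s, norm ((x s - xt i)/(xt j - xt i))
          ≤ (2*(K*ε*δ^(1 - 2*(ℓ (cl j):ℤ)))) * B^n := by
            refine mul_le_mul h1 h2 (Finset.prod_nonneg fun i _ => norm_nonneg _) ?_
            nlinarith [hεδ (1 - 2*(ℓ (cl j):ℤ)), hK.le]
        _ = (2*K*B^n) * (ε * δ^(1 - 2*(ℓ (cl j):ℤ))) := by ring
        _ ≤ (2*K*(n:ℝ)*2^n + 2*K*B^n + B₂^n) * (ε * δ^(1 - 2*(ℓ (cl j):ℤ))) := by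
            refine mul_le_mul_of_nonneg_right (by linarith) (hεδ _)
        _ = (2*K*(n:ℝ)*2^n + 2*K*B^n + B₂^n) * ε * δ^(1 - 2*(ℓ (cl j):ℤ)) := by ring
  · -- different cluster
    intro hcs
    have hcs' : ¬ cl j = cl s := fun h => hcs h.symm
    have hjs : j ≠ s := fun h => hcs (by rw [h])
    simp only [if_neg hjs]
    have hsj : s ≠ j := fun h => hjs h.symm
    have hsmem : s ∈ univ.erase j := Finset.mem_erase.mpr ⟨hsj, mem_univ s⟩
    rw [zero_sub, norm_neg, norm_prod, ← Finset.mul_prod_erase _ _ hsmem]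
    set Lz : ℤ := (((Finset.univ.filter fun a => a ≠ cl j).sup ℓ : ℕ) : ℤ) with hLdef
    have hqL : (ℓ (cl s) : ℤ) ≤ Lz := by
      rw [hLdef]
      have : ℓ (cl s) ≤ (Finset.univ.filter fun a => a ≠ cl j).sup ℓ :=
        Finset.le_sup (Finset.mem_filter.mpr ⟨mem_univ _, hcs⟩)
      exact_mod_cast this
    set pw : Fin n → ℤ := fun i => if cl i = cl s then 1 else if cl i = cl j then -1 else 0
      with hpwdef
    -- first factor
    have h1 : norm ((x s - xt s)/(xt j - xt s)) ≤
        B₂ * (ε * δ^(2 - 2*(ℓ (cl s):ℤ))) := by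
      have hd := htsepT j s (fun h => hcs h.symm)
      have hnum : norm (x s - xt s) ≤ K * ε * δ ^ (2 - 2*(ℓ (cl s):ℤ)) := by
        rw [norm_sub_rev]; exact hpert s
      refine (hratio _ _ _ _ (by linarith) hnum hd).trans ?_
      have heq : K * ε * δ ^ (2 - 2*(ℓ (cl s):ℤ)) / (T/2) =
          (2*K/T) * (ε * δ^(2 - 2*(ℓ (cl s):ℤ))) := by field_simp
      rw [heq]
      refine mul_le_mul_of_nonneg_right ?_ (hεδ _)
      rw [hB₂def]; linarith
    -- remaining factors
    have h2 : ∏ i ∈ (univ.erase j).erase s, norm ((x s - xt i)/(xt j - xt i)) ≤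
        ∏ i ∈ (univ.erase j).erase s, (B₂ * δ ^ pw i) := by
      refine Finset.prod_le_prod (fun i _ => norm_nonneg _) ?_
      intro i hi
      have his : i ≠ s := (Finset.mem_erase.mp hi).1
      have hij : i ≠ j := (Finset.mem_erase.mp (Finset.mem_erase.mp hi).2).1
      by_cases hciq : cl i = cl s
      · have hpwi : pw i = 1 := by rw [hpwdef]; simp [hciq]
        rw [hpwi]
        have hn' := hnum_same s i his hciq
        have hd : T/2 ≤ norm (xt j - xt i) := by
          refine htsepT j i fun h => hcs ?_
          rw [← hciq, ← h]
        refine (hratio _ _ _ _ (by linarith) hn' hd).trans ?_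
        have heq : (τ+1)*δ/(T/2) = (2*(τ+1)/T) * δ := by field_simp
        rw [heq, zpow_one]
        refine mul_le_mul_of_nonneg_right ?_ hδ0.le
        rw [hB₂def]; linarith
      · by_cases hcip : cl i = cl j
        · have hpwi : pw i = -1 := by rw [hpwdef]; simp [hciq, hcip, hcs']
          rw [hpwi]
          have hd := htsepδ j i (Ne.symm hij)
          refine (hratio _ _ _ _ (by linarith) (hnum3 s i) hd).trans ?_
          have heq : (3:ℝ)/(δ/2) = 6 * δ^(-1:ℤ) := by
            rw [_root_.zpow_neg_one]; field_simp; ring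
          rw [heq]
          refine mul_le_mul_of_nonneg_right ?_ (hzp (-1)).le
          rw [hB₂def]; linarith
        · have hpwi : pw i = 0 := by rw [hpwdef]; simp [hciq, hcip]
          rw [hpwi, zpow_zero, mul_one]
          have hd := htsepT j i (fun h => hcip h.symm)
          refine (hratio _ _ _ _ (by linarith) (hnum3 s i) hd).trans ?_
          have heq : (3:ℝ)/(T/2) = 6/T := by field_simp; ring
          rw [heq, hB₂def]; linarith
    have hcard2 : ((univ.erase j).erase s).card = n - 2 := by
      rw [Finset.card_erase_of_mem hsmem, Finset.card_erase_of_mem (mem_univ j),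
        Finset.card_univ, Fintype.card_fin]
      omega
    have h3 : ∏ i ∈ (univ.erase j).erase s, (B₂ * δ ^ pw i) =
        B₂^(n-2) * δ^(∑ i ∈ (univ.erase j).erase s, pw i) := by
      rw [Finset.prod_mul_distrib, Finset.prod_const, hcard2, pvt_zpow_sum δ hδne]
    have hsumpw : ∑ i ∈ (univ.erase j).erase s, pw i = (ℓ (cl s) : ℤ) - (ℓ (cl j) : ℤ) := by
      have e1 : ∑ i ∈ (univ.erase j).erase s, pw i = (∑ i ∈ univ.erase j, pw i) - pw s :=
        Finset.sum_erase_eq_sub hsmem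
      have e2 : ∑ i ∈ univ.erase j, pw i = (∑ i ∈ univ, pw i) - pw j :=
        Finset.sum_erase_eq_sub (mem_univ j)
      have hpws : pw s = 1 := by rw [hpwdef]; simp
      have hpwj : pw j = -1 := by
        rw [hpwdef]
        simp [hcs']
      have e3 : ∑ i ∈ univ, pw i = (ℓ (cl s) : ℤ) - (ℓ (cl j) : ℤ) := by
        have hptw : ∀ i, pw i = (if cl i = cl s then (1:ℤ) else 0) -
            (if cl i = cl j then (1:ℤ) else 0) := by
          intro i
          rw [hpwdef]
          by_cases h1 : cl i = cl s
          · simp [h1, hcs]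
          · by_cases h2 : cl i = cl j <;> simp [h1, h2, hcs']
        rw [Finset.sum_congr rfl (fun i _ => hptw i), Finset.sum_sub_distrib,
          Finset.sum_boole, Finset.sum_boole]
        rw [hcardℓ (cl s), hcardℓ (cl j)]
      rw [e1, e2, e3, hpws, hpwj]
      ring
    have hzpow_le : δ^((2 - 2*(ℓ (cl s):ℤ)) + ((ℓ (cl s) : ℤ) - (ℓ (cl j) : ℤ))) ≤
        δ^(2 - (ℓ (cl j) : ℤ) - Lz) := by
      refine hmono _ _ ?_
      omega
    have hB₂pow : B₂^(n-2) ≤ B₂^n := pow_le_pow_right₀ hB₂1 (Nat.sub_le n 2)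
    calc norm ((x s - xt s)/(xt j - xt s)) *
          ∏ i ∈ (univ.erase j).erase s, norm ((x s - xt i)/(xt j - xt i))
        ≤ (B₂ * (ε * δ^(2 - 2*(ℓ (cl s):ℤ)))) * (B₂^(n-2) * δ^((ℓ (cl s) : ℤ) - (ℓ (cl j) : ℤ))) := by
          refine mul_le_mul h1 ?_ (Finset.prod_nonneg fun i _ => norm_nonneg _) ?_
          · rw [← hsumpw, ← h3]; exact h2
          · exact mul_nonneg (by linarith) (hεδ _)
      _ = (B₂ * B₂^(n-2)) * ε * (δ^(2 - 2*(ℓ (cl s):ℤ)) * δ^((ℓ (cl s) : ℤ) - (ℓ (cl j) : ℤ))) := by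
          ring
      _ = (B₂ * B₂^(n-2)) * ε *
            δ^((2 - 2*(ℓ (cl s):ℤ)) + ((ℓ (cl s) : ℤ) - (ℓ (cl j) : ℤ))) := by
          rw [zpow_add₀ hδne]
      _ ≤ B₂^n * ε * δ^(2 - (ℓ (cl j) : ℤ) - Lz) := by
          have hB₂n2 : (0:ℝ) ≤ B₂^(n-2) := by positivity
          refine mul_le_mul (mul_le_mul ?_ le_rfl hε0.le ?_) hzpow_le (hzp _).le ?_
          · have heq : B₂ * B₂^(n-2) = B₂^(n-2+1) := by rw [pow_succ]; ring
            rw [heq]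
            exact pow_le_pow_right₀ hB₂1 (by omega)
          · linarith
          · exact mul_nonneg (by linarith : (0:ℝ) ≤ B₂^n) hε0.le
      _ ≤ (2*K*(n:ℝ)*2^n + 2*K*B^n + B₂^n) * ε * δ^(2 - (ℓ (cl j) : ℤ) - Lz) := by
          refine mul_le_mul_of_nonneg_right
            (mul_le_mul_of_nonneg_right (by linarith) hε0.le) (hzp _).le
end

section
/- Fix integers n ≥ 2, ζ ≥ 1 and cluster sizes ℓ_1,…,ℓ_ζ ≥ 1 with ℓ_1+…+ℓ_ζ = n and ℓ* = max_s ℓ_s, and fix τ > 1, η > 1, T > 0. Then there exists a constant c > 0, depending only on these fixed parameters and not on δ, such that the following holds. Let x_1,…,x_n on the unit circle form an (n,ζ,δ,τ,η,T)-clustered configuration with clusters of sizes ℓ_1,…,ℓ_ζ (0 < δ < 1, τδ < T), and let x̃_1,…,x̃_n ∈ ℂ satisfy |x̃_j − x_j| ≤ ρ̄ δ^{2(ℓ*−ℓ_{(j)})+1} for every j, where ℓ_{(j)} is the size of the cluster containing j and 0 < ρ̄ < (1/3)·min(1, ηT). Then for every j ∈ {1,…,n}: ∏_{b ≠ j} |x̃_j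 − x̃_b| ≥ c δ^{ℓ_{(j)}−1}. -/
private lemma tri_key (a b a' b' : ℂ) :
    ‖a - b‖ - ‖a' - a‖ - ‖b' - b‖ ≤
      ‖a' - b'‖ := by
  have h : a - b = (a - a') + (a' - b') + (b' - b) := by ring
  have h1 : ‖a - b‖ ≤
      ‖a - a'‖ + ‖a' - b'‖ + ‖b' - b‖ := by
    rw [h]
    exact (norm_add_le _ _).trans
      (add_le_add_left (norm_add_le _ _) _)
  have h2 : ‖a - a'‖ = ‖a' - a‖ := by
    rw [← norm_neg]; ring_nf
  linarith

/-- Separation lower bound for perturbed nodes: if the perturbed nodes satisfy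
`|x̃_j - x_j| ≤ ρ̄ δ^{2(ℓ*-ℓ_{(j)})+1}` for a clustered configuration, then
`∏_{b≠j} |x̃_j - x̃_b| ≥ c δ^{ℓ_{(j)}-1}`. -/
theorem prony_perturbed_node_separation
    (n ζ : ℕ) (hn : 2 ≤ n) (hζ : 1 ≤ ζ)
    (ℓ : Fin ζ → ℕ) (hℓ : ∀ s, 1 ≤ ℓ s) (hsum : ∑ s, ℓ s = n)
    (lstar : ℕ) (hlstar : lstar = Finset.univ.sup ℓ)
    (τ η T : ℝ) (hτ : 1 < τ) (hη : 1 < η) (hT : 0 < T) :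
    ∃ c : ℝ, 0 < c ∧
      ∀ (δ : ℝ) (x xt : Fin n → ℂ) (cl : Fin n → Fin ζ) (ρbar : ℝ),
        0 < δ → δ < 1 → τ * δ < T →
        (∀ j, ‖x j‖ = 1) →
        Function.Injective x →
        (∀ i j, i ≠ j → cl i = cl j →
          δ ≤ ‖x i - x j‖ ∧ ‖x i - x j‖ ≤ τ * δ) →
        (∀ i j, cl i ≠ cl j →
          T ≤ ‖x i - x j‖ ∧ ‖x i - x j‖ ≤ η * T) →
        (∀ s, (Finset.univ.filter fun j => cl j = s).card = ℓ s) →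
        0 < ρbar → ρbar < (1 / 3) * min 1 (η * T) →
        (∀ j, ‖xt j - x j‖ ≤
          ρbar * δ ^ (2 * (lstar - ℓ (cl j)) + 1)) →
        ∀ j : Fin n,
          c * δ ^ (ℓ (cl j) - 1) ≤
            ∏ b ∈ Finset.univ.erase j, ‖xt j - xt b‖ := by
  set M : ℝ := min (T / 3) 1 with hM
  have hMpos : 0 < M := lt_min (by linarith) one_pos
  have hM1 : M ≤ 1 := min_le_right _ _
  have hMT : M ≤ T / 3 := min_le_left _ _
  refine ⟨(1 / 3) ^ n * M ^ n, by positivity, ?_⟩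
  intro δ x xt cl ρbar hδ0 hδ1 hτδ _ _ hsame hdiff hcard hρ0 hρub hpert j
  have hρ3 : ρbar < 1 / 3 := by
    have : (1 / 3 : ℝ) * min 1 (η * T) ≤ 1 / 3 * 1 := by
      have := min_le_left (1 : ℝ) (η * T); linarith
    linarith
  have hδT : δ < T := by nlinarith
  -- perturbation bounds
  have hpb : ∀ b : Fin n, ‖xt b - x b‖ ≤ ρbar * δ := by
    intro b
    refine (hpert b).trans ?_
    have : δ ^ (2 * (lstar - ℓ (cl b)) + 1) ≤ δ ^ 1 :=
      pow_le_pow_of_le_one hδ0.le hδ1.le (by omega)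
    rw [pow_one] at this
    nlinarith
  have hlowA : ∀ b : Fin n, b ≠ j → cl b = cl j →
      1 / 3 * δ ≤ ‖xt j - xt b‖ := by
    intro b hb hb2
    have h1 := (hsame j b (fun h => hb h.symm) hb2.symm).1
    have h2 := hpb j
    have h3 := hpb b
    have := tri_key (x j) (x b) (xt j) (xt b)
    nlinarith
  have hlowB : ∀ b : Fin n, cl b ≠ cl j →
      T / 3 ≤ ‖xt j - xt b‖ := by
    intro b hb2
    have h1 := (hdiff j b (fun h => hb2 h.symm)).1
    have h2 := hpb j
    have h3 := hpb b
    have := tri_key (x j) (x b) (xt j) (xt b)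
    nlinarith
  -- split product
  classical
  rw [← Finset.prod_filter_mul_prod_filter_not (Finset.univ.erase j)
      (fun b => cl b = cl j)]
  set A := (Finset.univ.erase j).filter (fun b => cl b = cl j) with hA
  set B := (Finset.univ.erase j).filter (fun b => ¬ cl b = cl j) with hB
  have hcardA : A.card = ℓ (cl j) - 1 := by
    have hAe : A = (Finset.univ.filter fun b => cl b = cl j).erase j := by
      ext b
      simp [hA, Finset.mem_erase, Finset.mem_filter, and_comm]
    rw [hAe, Finset.card_erase_of_mem (by simp), hcard]
  have hcardAn : A.card ≤ n := by
    have := Finset.card_filter_le (Finset.univ.erase j) (fun b => cl b = cl j)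
    have h2 := Finset.card_erase_le (a := j) (s := (Finset.univ : Finset (Fin n)))
    simpa using le_trans (by simpa [hA] using this) (by simpa using h2)
  have hcardBn : B.card ≤ n := by
    have := Finset.card_filter_le (Finset.univ.erase j) (fun b => ¬ cl b = cl j)
    have h2 := Finset.card_erase_le (a := j) (s := (Finset.univ : Finset (Fin n)))
    simpa using le_trans (by simpa [hB] using this) (by simpa using h2)
  have hprodA : (1 / 3 * δ) ^ A.card ≤ ∏ b ∈ A, ‖xt j - xt b‖ := by
    rw [← Finset.prod_const]
    refine Finset.prod_le_prod (fun b _ => by positivity) ?_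
    intro b hb
    rw [hA, Finset.mem_filter, Finset.mem_erase] at hb
    exact hlowA b hb.1.1 hb.2
  have hprodB : (T / 3) ^ B.card ≤ ∏ b ∈ B, ‖xt j - xt b‖ := by
    rw [← Finset.prod_const]
    refine Finset.prod_le_prod (fun b _ => by positivity) ?_
    intro b hb
    rw [hB, Finset.mem_filter] at hb
    exact hlowB b hb.2
  have hc1 : (1 / 3 : ℝ) ^ n ≤ (1 / 3) ^ A.card :=
    pow_le_pow_of_le_one (by norm_num) (by norm_num) hcardAn
  have hc2 : M ^ n ≤ (T / 3) ^ B.card :=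
    le_trans (pow_le_pow_of_le_one hMpos.le hM1 hcardBn)
      (pow_le_pow_left₀ hMpos.le hMT _)
  have key : (1 / 3) ^ n * M ^ n * δ ^ (ℓ (cl j) - 1) ≤
      (1 / 3 * δ) ^ A.card * (T / 3) ^ B.card := by
    rw [mul_pow, ← hcardA]
    have hδp : (0 : ℝ) ≤ δ ^ A.card := by positivity
    calc (1 / 3 : ℝ) ^ n * M ^ n * δ ^ A.card
        ≤ (1 / 3) ^ A.card * (T / 3) ^ B.card * δ ^ A.card := by
          exact mul_le_mul (mul_le_mul hc1 hc2 (by positivity) (by positivity))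
            le_rfl hδp (by positivity)
      _ = (1 / 3) ^ A.card * δ ^ A.card * (T / 3) ^ B.card := by ring
  refine key.trans (mul_le_mul hprodA hprodB (by positivity) ?_)
  exact Finset.prod_nonneg fun b _ => (norm_nonneg _)
end

section
/- Let x_1,…,x_n (n ≥ 2) on the unit circle form an (n,ζ,δ,τ,η,T)-clustered configuration with clusters C_1,…,C_ζ of sizes ℓ_1,…,ℓ_ζ, and let α_1,…,α_n ∈ ℂ satisfy |α_j| ≥ 𝔪 > 0 for all j. Set ϱ = n(n−1)/2 − ∑_s ℓ_s(ℓ_s−1)/2. Fix j* belonging to the cluster C_μ (of size ℓ_μ) and let z ∈ ℂ satisfy |z − x_{j*}| = ρ with 0 < ρ < δ/3. Then the homogeneous Prony polynomial satisfies |p̄(z)| ≥ 𝔪^n · ρ · (δ − ρ)^{ℓ_μ−1} · (T − ρ)^{n−ℓ_μ} · T^{2ϱ} · δ^{n(n−1)−2ϱ}. -/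
open Matrix


lemma abs_det_vandermonde {m : ℕ} (v : Fin m → ℂ) :
    ‖Matrix.det (Matrix.vandermonde v)‖ =
      ∏ p ∈ Finset.univ.filter (fun p : Fin m × Fin m => p.1 < p.2),
        ‖v p.2 - v p.1‖ := by
  rw [Matrix.det_vandermonde]
  rw [norm_prod]
  simp only [norm_prod]
  rw [show (∏ i : Fin m, ∏ j ∈ Finset.Ioi i, ‖v j - v i‖) =
      ∏ p ∈ (Finset.univ : Finset (Fin m)).sigma (fun i => Finset.Ioi i),
        ‖v p.2 - v p.1‖ by rw [Finset.prod_sigma]]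
  refine Finset.prod_bij (fun p _ => (p.1, p.2)) ?_ ?_ ?_ ?_
  · rintro ⟨i, j⟩ hp
    simp only [Finset.mem_sigma, Finset.mem_Ioi] at hp
    simp [hp.2]
  · rintro ⟨i, j⟩ hp ⟨i', j'⟩ hp' h
    simp only [Prod.mk.injEq] at h
    obtain ⟨h1, h2⟩ := h
    subst h1; subst h2; rfl
  · rintro ⟨i, j⟩ hp
    simp only [Finset.mem_filter, Finset.mem_univ, true_and] at hp
    exact ⟨⟨i, j⟩, by simp [hp], rfl⟩
  · intros; rfl

lemma prod_pairs_cons {n : ℕ} (z : ℂ) (x : Fin n → ℂ) :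
    (∏ p ∈ Finset.univ.filter (fun p : Fin (n+1) × Fin (n+1) => p.1 < p.2),
        ‖(Fin.cons z x : Fin (n+1) → ℂ) p.2 - (Fin.cons z x : Fin (n+1) → ℂ) p.1‖) =
      (∏ j, ‖x j - z‖) *
        ∏ p ∈ Finset.univ.filter (fun p : Fin n × Fin n => p.1 < p.2),
          ‖x p.2 - x p.1‖ := by
  rw [← Finset.prod_filter_mul_prod_filter_not
      (Finset.univ.filter (fun p : Fin (n+1) × Fin (n+1) => p.1 < p.2)) (fun p => p.1 = 0)]
  congr 1
  · refine (Finset.prod_bij (fun (j : Fin n) _ => ((0 : Fin (n+1)), j.succ)) ?_ ?_ ?_ ?_).symm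
    · intro j _
      simp [Fin.succ_pos]
    · intro j _ j' _ h
      simpa [Fin.succ_inj] using h
    · rintro ⟨i, j⟩ hp
      simp only [Finset.mem_filter, Finset.mem_univ, true_and] at hp
      have h0 : i = 0 := hp.2
      subst h0
      have hj : j ≠ 0 := Fin.pos_iff_ne_zero.mp hp.1
      exact ⟨j.pred hj, Finset.mem_univ _, by simp⟩
    · intro j _
      simp
  · refine (Finset.prod_bij (fun (p : Fin n × Fin n) _ => (p.1.succ, p.2.succ)) ?_ ?_ ?_ ?_).symm
    · rintro ⟨i, j⟩ hp
      simp only [Finset.mem_filter, Finset.mem_univ, true_and] at hp ⊢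
      exact ⟨Fin.succ_lt_succ_iff.mpr hp, Fin.succ_ne_zero _⟩
    · rintro ⟨i, j⟩ _ ⟨i', j'⟩ _ h
      simp only [Prod.mk.injEq, Fin.succ_inj] at h
      exact Prod.ext h.1 h.2
    · rintro ⟨i, j⟩ hp
      simp only [Finset.mem_filter, Finset.mem_univ, true_and] at hp
      obtain ⟨hlt, hi0⟩ := hp
      have hi : i ≠ 0 := hi0
      have hj : j ≠ 0 := by
        intro h; subst h; exact absurd hlt (by simp)
      refine ⟨(i.pred hi, j.pred hj), ?_, ?_⟩
      · simp only [Finset.mem_filter, Finset.mem_univ, true_and]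
        rw [← Fin.succ_lt_succ_iff, Fin.succ_pred, Fin.succ_pred]
        exact hlt
      · simp
    · rintro ⟨i, j⟩ _
      simp

lemma prony_det_factor {n : ℕ} (x : Fin n → ℂ) (α : Fin n → ℂ) (z : ℂ) :
    (Matrix.det (Matrix.of fun i k : Fin (n + 1) =>
        if (i : ℕ) = 0 then z ^ (k : ℕ)
        else ∑ j, α j * x j ^ ((i : ℕ) - 1 + (k : ℕ)))) =
      ((∏ j, α j) * (Matrix.vandermonde x).det) * (Matrix.vandermonde (Fin.cons z x)).det := by
  have hM : (Matrix.of fun i k : Fin (n + 1) =>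
        if (i : ℕ) = 0 then z ^ (k : ℕ)
        else ∑ j, α j * x j ^ ((i : ℕ) - 1 + (k : ℕ))) =
      (Matrix.of (Fin.cons (fun j : Fin (n+1) => if j = 0 then (1:ℂ) else 0)
        (fun i : Fin n => Fin.cons 0 (fun j : Fin n => α j * x j ^ (i : ℕ))))) *
      Matrix.vandermonde (Fin.cons z x) := by
    ext i k
    rw [Matrix.mul_apply]
    refine Fin.cases ?_ ?_ i
    · simp only [Matrix.of_apply, Fin.cons_zero, Fin.val_zero, if_true]
      rw [Finset.sum_eq_single (0 : Fin (n+1))]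
      · simp [Matrix.vandermonde]
      · intro b _ hb
        simp [hb]
      · simp
    · intro i'
      simp only [Matrix.of_apply, Fin.cons_succ, Fin.val_succ, Nat.succ_ne_zero, if_false,
        Nat.add_sub_cancel]
      rw [Fin.sum_univ_succ]
      simp only [Fin.cons_zero, Fin.cons_succ, zero_mul, zero_add]
      refine Finset.sum_congr rfl fun j _ => ?_
      simp [Matrix.vandermonde, pow_add, mul_assoc]
  rw [hM, Matrix.det_mul]
  congr 1
  rw [Matrix.det_succ_column_zero]
  rw [Fin.sum_univ_succ]
  have h0 : ∀ i' : Fin n, (Matrix.of (Fin.cons (fun j : Fin (n+1) => if j = 0 then (1:ℂ) else 0)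
        (fun i : Fin n => Fin.cons 0 (fun j : Fin n => α j * x j ^ (i : ℕ))))) i'.succ 0 = 0 := by
    intro i'; simp
  rw [Finset.sum_eq_zero (fun i' _ => by rw [h0 i']; ring)]
  simp only [Fin.val_zero, pow_zero, one_mul, add_zero, Matrix.of_apply, Fin.cons_zero, if_true]
  have : ((Matrix.of (Fin.cons (fun j : Fin (n+1) => if j = 0 then (1:ℂ) else 0)
        (fun i : Fin n => Fin.cons 0 (fun j : Fin n => α j * x j ^ (i : ℕ))))).submatrix
      (Fin.succAbove 0) Fin.succ) = (Matrix.vandermonde x)ᵀ * Matrix.diagonal α := by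
    ext i j
    simp [Matrix.mul_apply, Matrix.diagonal, Matrix.vandermonde, Fin.succAbove,
      Finset.sum_ite_eq, mul_comm]
  rw [this, Matrix.det_mul, Matrix.det_transpose, Matrix.det_diagonal]
  ring

lemma sq_prod_lt_eq_offDiag {n : ℕ} (x : Fin n → ℂ) :
    (∏ p ∈ Finset.univ.filter (fun p : Fin n × Fin n => p.1 < p.2),
        ‖x p.2 - x p.1‖) ^ 2 =
      ∏ p ∈ (Finset.univ : Finset (Fin n)).offDiag, ‖x p.2 - x p.1‖ := by
  rw [← Finset.prod_filter_mul_prod_filter_not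
      ((Finset.univ : Finset (Fin n)).offDiag) (fun p => p.1 < p.2), sq]
  congr 1
  · apply Finset.prod_congr _ (fun _ _ => rfl)
    ext p
    simp only [Finset.mem_filter, Finset.mem_univ, true_and, Finset.mem_offDiag]
    constructor
    · intro h; exact ⟨ne_of_lt h, h⟩
    · intro h; exact h.2
  · refine Finset.prod_bij (fun (p : Fin n × Fin n) _ => p.swap) ?_ ?_ ?_ ?_
    · rintro ⟨i, j⟩ hp
      simp only [Finset.mem_filter, Finset.mem_univ, true_and] at hp
      simp only [Finset.mem_filter, Finset.mem_offDiag, Finset.mem_univ, true_and, Prod.swap]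
      exact ⟨(ne_of_lt hp).symm, not_lt.mpr (le_of_lt hp)⟩
    · rintro p _ q _ h
      exact Prod.swap_injective h
    · rintro ⟨i, j⟩ hp
      simp only [Finset.mem_filter, Finset.mem_offDiag, Finset.mem_univ, true_and] at hp
      obtain ⟨hne, hnlt⟩ := hp
      have : j < i := lt_of_le_of_ne (not_lt.mp hnlt) (Ne.symm hne)
      exact ⟨(j, i), by simp [this], rfl⟩
    · rintro ⟨i, j⟩ _
      simp [norm_sub_rev]

lemma card_intra {n ζ : ℕ} (cl : Fin n → Fin ζ) (ℓ : Fin ζ → ℕ)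
    (hcard : ∀ s, (Finset.univ.filter fun j => cl j = s).card = ℓ s) :
    (((Finset.univ : Finset (Fin n)).offDiag).filter (fun p => cl p.1 = cl p.2)).card =
      ∑ s, (ℓ s * ℓ s - ℓ s) := by
  have : (((Finset.univ : Finset (Fin n)).offDiag).filter (fun p => cl p.1 = cl p.2)) =
      Finset.univ.biUnion (fun s : Fin ζ =>
        ((Finset.univ.filter fun j => cl j = s)).offDiag) := by
    ext ⟨i, j⟩
    simp only [Finset.mem_filter, Finset.mem_offDiag, Finset.mem_biUnion, Finset.mem_univ,
      true_and]
    constructor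
    · rintro ⟨hne, hcl⟩
      exact ⟨cl i, ⟨rfl, hcl.symm, hne⟩⟩
    · rintro ⟨s, h1, h2, h3⟩
      exact ⟨h3, h1.trans h2.symm⟩
  rw [this, Finset.card_biUnion]
  · refine Finset.sum_congr rfl fun s _ => ?_
    rw [Finset.offDiag_card, hcard]
  · intro s _ t _ hst
    rw [Function.onFun, Finset.disjoint_left]
    rintro ⟨i, j⟩ h1 h2
    rw [Finset.mem_offDiag] at h1 h2
    obtain ⟨hi1, _, _⟩ := h1
    obtain ⟨hi2, _, _⟩ := h2
    rw [Finset.mem_filter] at hi1 hi2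
    exact hst (hi1.2 ▸ hi2.2)

lemma rho_arith {n ζ : ℕ} (ℓ : Fin ζ → ℕ) (hℓ : ∀ s, 1 ≤ ℓ s) (hsum : ∑ s, ℓ s = n)
    (ϱ : ℕ) (hϱ : ϱ = n * (n - 1) / 2 - ∑ s, ℓ s * (ℓ s - 1) / 2) :
    2 * ϱ = (n * n - n) - ∑ s, (ℓ s * ℓ s - ℓ s) ∧
      n * (n - 1) - 2 * ϱ = ∑ s, (ℓ s * ℓ s - ℓ s) := by
  set a := ∑ s, (ℓ s * ℓ s - ℓ s) with ha
  have hterm : ∀ s : Fin ζ, ℓ s * (ℓ s - 1) = ℓ s * ℓ s - ℓ s := by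
    intro s
    rw [Nat.mul_sub_left_distrib, mul_one]
  have heven : ∀ m : ℕ, Even (m * (m - 1)) := by
    intro m
    rcases Nat.even_or_odd m with h | h
    · exact h.mul_right _
    · rcases m with _ | m
      · simp
      · simp only [Nat.add_sub_cancel]
        exact (Nat.Odd.sub_odd h odd_one).mul_left _
  have hnn : n * (n - 1) = n * n - n := by rw [Nat.mul_sub_left_distrib, mul_one]
  -- a ≤ n * (n-1)
  have hle_n : ∀ s, ℓ s ≤ n := by
    intro s
    rw [← hsum]
    exact Finset.single_le_sum (fun i _ => Nat.zero_le _) (Finset.mem_univ s)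
  have ha_le : a ≤ n * (n - 1) := by
    rw [hnn, ha]
    calc ∑ s, (ℓ s * ℓ s - ℓ s) ≤ ∑ s, (ℓ s * n - ℓ s) := by
          refine Finset.sum_le_sum fun s _ => Nat.sub_le_sub_right ?_ _
          exact Nat.mul_le_mul_left _ (hle_n s)
      _ = ∑ s, ℓ s * n - ∑ s, ℓ s := by
          rw [Finset.sum_tsub_distrib]
          intro s _
          calc ℓ s = ℓ s * 1 := (mul_one _).symm
            _ ≤ ℓ s * n := Nat.mul_le_mul_left _ (le_trans (hℓ s) (hle_n s))
      _ = n * n - n := by rw [← Finset.sum_mul, hsum, mul_comm]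
  have hsum_half : 2 * (∑ s, ℓ s * (ℓ s - 1) / 2) = a := by
    rw [Finset.mul_sum, ha]
    refine Finset.sum_congr rfl fun s _ => ?_
    rw [Nat.mul_div_cancel' ((heven (ℓ s)).two_dvd), hterm]
  have h2ϱ : 2 * ϱ = n * (n - 1) - a := by
    rw [hϱ, Nat.mul_sub_left_distrib, hsum_half, Nat.mul_div_cancel' ((heven n).two_dvd)]
  refine ⟨by rw [h2ϱ, hnn], ?_⟩
  rw [h2ϱ, Nat.sub_sub_self ha_le]


/-- Lower bound on the homogeneous Prony polynomial near a cluster node (inequality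
(5.5)–(5.6)): for `z` at distance `ρ < δ/3` from a node `x_{j*}` of a cluster of size `ℓ_μ`,
`|p̄(z)| ≥ 𝔪^n ρ (δ-ρ)^{ℓ_μ-1} (T-ρ)^{n-ℓ_μ} T^{2ϱ} δ^{n(n-1)-2ϱ}`. -/
theorem prony_homogeneous_poly_lower_bound
    (n ζ : ℕ) (hn : 2 ≤ n) (hζ : 1 ≤ ζ)
    (ℓ : Fin ζ → ℕ) (hℓ : ∀ s, 1 ≤ ℓ s) (hsum : ∑ s, ℓ s = n)
    (lstar : ℕ) (hlstar : lstar = Finset.univ.sup ℓ)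
    (δ τ η T : ℝ) (hδ : 0 < δ) (hδ1 : δ < 1) (hτ : 1 < τ) (hη : 1 < η)
    (hT : 0 < T) (hτδT : τ * δ < T)
    (x : Fin n → ℂ) (cl : Fin n → Fin ζ) (α : Fin n → ℂ) (mA : ℝ)
    (hcirc : ∀ j, ‖x j‖ = 1)
    (hinj : Function.Injective x)
    (hintra : ∀ i j, i ≠ j → cl i = cl j →
      δ ≤ ‖x i - x j‖ ∧ ‖x i - x j‖ ≤ τ * δ)
    (hinter : ∀ i j, cl i ≠ cl j →
      T ≤ ‖x i - x j‖ ∧ ‖x i - x j‖ ≤ η * T)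
    (hcard : ∀ s, (Finset.univ.filter fun j => cl j = s).card = ℓ s)
    (hmA : 0 < mA) (hα : ∀ j, mA ≤ ‖α j‖)
    (ϱ : ℕ) (hϱ : ϱ = n * (n - 1) / 2 - ∑ s, ℓ s * (ℓ s - 1) / 2)
    (jstar : Fin n) (z : ℂ) (ρ : ℝ)
    (hρ0 : 0 < ρ) (hρ1 : ρ < δ / 3)
    (hz : ‖z - x jstar‖ = ρ) :
    mA ^ n * ρ * (δ - ρ) ^ (ℓ (cl jstar) - 1) * (T - ρ) ^ (n - ℓ (cl jstar)) *
        T ^ (2 * ϱ) * δ ^ (n * (n - 1) - 2 * ϱ) ≤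
      ‖Matrix.det (Matrix.of fun i k : Fin (n + 1) =>
        if (i : ℕ) = 0 then z ^ (k : ℕ)
        else ∑ j, α j * x j ^ ((i : ℕ) - 1 + (k : ℕ)))‖ := by
  have hρδ : ρ < δ := by linarith
  have hδT : δ < T := by nlinarith
  have hρT : ρ < T := by linarith
  rw [prony_det_factor, norm_mul, norm_mul, abs_det_vandermonde, abs_det_vandermonde,
    prod_pairs_cons, norm_prod]
  set μ := cl jstar with hμ
  set L := ℓ μ with hL
  set Q : ℝ := ∏ p ∈ Finset.univ.filter (fun p : Fin n × Fin n => p.1 < p.2),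
    ‖x p.2 - x p.1‖ with hQ
  set P : ℝ := ∏ j, ‖x j - z‖ with hP
  -- h1 : amplitudes
  have h1 : mA ^ n ≤ ∏ j, ‖α j‖ := by
    calc mA ^ n = ∏ _j : Fin n, mA := by
          rw [Finset.prod_const, Finset.card_univ, Fintype.card_fin]
      _ ≤ ∏ j, ‖α j‖ :=
          Finset.prod_le_prod (fun _ _ => le_of_lt hmA) (fun j _ => hα j)
  -- h2 : node factors
  have habs_sub : ∀ j : Fin n, j ≠ jstar → ‖x j - x jstar‖ - ρ ≤
      ‖x j - z‖ := by
    intro j _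
    have htri : ‖x j - x jstar‖ ≤
        ‖x j - z‖ + ‖z - x jstar‖ := by
      have := norm_add_le (x j - z) (z - x jstar)
      simpa using this
    rw [hz] at htri
    linarith
  have h2 : ρ * (δ - ρ) ^ (L - 1) * (T - ρ) ^ (n - L) ≤ P := by
    classical
    set A1 : Finset (Fin n) := Finset.univ.filter (fun j => cl j = μ) with hA1
    have hjA1 : jstar ∈ A1 := by simp [hA1, hμ]
    have hcardA1 : A1.card = L := hcard μ
    have hcard_erase : (A1.erase jstar).card = L - 1 := by
      rw [Finset.card_erase_of_mem hjA1, hcardA1]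
    have hcard_neg : (Finset.univ.filter (fun j => ¬ cl j = μ)).card = n - L := by
      have h := Finset.card_filter_add_card_filter_not
        (s := (Finset.univ : Finset (Fin n))) (p := fun j => cl j = μ)
      rw [Finset.card_univ, Fintype.card_fin, hcardA1] at h
      omega
    have hPsplit : P = (∏ j ∈ A1, ‖x j - z‖) *
        ∏ j ∈ Finset.univ.filter (fun j => ¬ cl j = μ), ‖x j - z‖ :=
      (Finset.prod_filter_mul_prod_filter_not _ _ _).symm
    have hA1split : (∏ j ∈ A1, ‖x j - z‖) =
        ‖x jstar - z‖ * ∏ j ∈ A1.erase jstar, ‖x j - z‖ :=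
      (Finset.mul_prod_erase _ _ hjA1).symm
    have hρeq : ‖x jstar - z‖ = ρ := by
      rw [norm_sub_rev, hz]
    have hb1 : (δ - ρ) ^ (L - 1) ≤ ∏ j ∈ A1.erase jstar, ‖x j - z‖ := by
      calc (δ - ρ) ^ (L - 1) = ∏ _j ∈ A1.erase jstar, (δ - ρ) := by
            rw [Finset.prod_const, hcard_erase]
        _ ≤ _ := by
            refine Finset.prod_le_prod (fun _ _ => by linarith) (fun j hj => ?_)
            have hjne : j ≠ jstar := Finset.ne_of_mem_erase hj
            have hjcl : cl j = μ := by
              have := Finset.mem_of_mem_erase hj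
              simpa [hA1] using this
            have hδle : δ ≤ ‖x j - x jstar‖ :=
              (hintra j jstar hjne (hjcl.trans hμ.symm ▸ hjcl)).1
            have := habs_sub j hjne
            linarith
    have hb2 : (T - ρ) ^ (n - L) ≤
        ∏ j ∈ Finset.univ.filter (fun j => ¬ cl j = μ), ‖x j - z‖ := by
      calc (T - ρ) ^ (n - L) = ∏ _j ∈ Finset.univ.filter (fun j => ¬ cl j = μ), (T - ρ) := by
            rw [Finset.prod_const, hcard_neg]
        _ ≤ _ := by
            refine Finset.prod_le_prod (fun _ _ => by linarith) (fun j hj => ?_)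
            have hjcl : cl j ≠ μ := by simpa using hj
            have hjne : j ≠ jstar := fun h => hjcl (h ▸ rfl)
            have hTle : T ≤ ‖x j - x jstar‖ := (hinter j jstar hjcl).1
            have := habs_sub j hjne
            linarith
    rw [hPsplit, hA1split, hρeq]
    have hnn1 : (0:ℝ) ≤ (δ - ρ) ^ (L - 1) := pow_nonneg (by linarith) _
    have hnn2 : (0:ℝ) ≤ (T - ρ) ^ (n - L) := pow_nonneg (by linarith) _
    have h1' : ρ * (δ - ρ) ^ (L - 1) ≤ ρ * ∏ j ∈ A1.erase jstar, ‖x j - z‖ :=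
      mul_le_mul_of_nonneg_left hb1 (le_of_lt hρ0)
    calc ρ * (δ - ρ) ^ (L - 1) * (T - ρ) ^ (n - L)
        ≤ (ρ * ∏ j ∈ A1.erase jstar, ‖x j - z‖) *
            ∏ j ∈ Finset.univ.filter (fun j => ¬ cl j = μ), ‖x j - z‖ := by
          refine mul_le_mul h1' hb2 hnn2 ?_
          refine mul_nonneg (le_of_lt hρ0) (Finset.prod_nonneg fun _ _ => norm_nonneg _)
      _ = _ := by ring
  -- h3 : Vandermonde square
  have h3 : T ^ (2 * ϱ) * δ ^ (n * (n - 1) - 2 * ϱ) ≤ Q ^ 2 := by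
    rw [hQ, sq_prod_lt_eq_offDiag]
    classical
    set OD := (Finset.univ : Finset (Fin n)).offDiag with hOD
    have hsplit : (∏ p ∈ OD, ‖x p.2 - x p.1‖) =
        (∏ p ∈ OD.filter (fun p => cl p.1 = cl p.2), ‖x p.2 - x p.1‖) *
          ∏ p ∈ OD.filter (fun p => ¬ cl p.1 = cl p.2), ‖x p.2 - x p.1‖ :=
      (Finset.prod_filter_mul_prod_filter_not _ _ _).symm
    obtain ⟨hr1, hr2⟩ := rho_arith ℓ hℓ hsum ϱ hϱ
    have hcintra : (OD.filter (fun p => cl p.1 = cl p.2)).card = ∑ s, (ℓ s * ℓ s - ℓ s) :=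
      card_intra cl ℓ hcard
    have hcinter : (OD.filter (fun p => ¬ cl p.1 = cl p.2)).card = 2 * ϱ := by
      have h := Finset.card_filter_add_card_filter_not
        (s := OD) (p := fun p => cl p.1 = cl p.2)
      rw [hcintra] at h
      have hODcard : OD.card = n * n - n := by
        rw [hOD, Finset.offDiag_card, Finset.card_univ, Fintype.card_fin]
      rw [hODcard] at h
      omega
    have hb1 : δ ^ (n * (n - 1) - 2 * ϱ) ≤
        ∏ p ∈ OD.filter (fun p => cl p.1 = cl p.2), ‖x p.2 - x p.1‖ := by
      calc δ ^ (n * (n - 1) - 2 * ϱ)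
          = ∏ _p ∈ OD.filter (fun p => cl p.1 = cl p.2), δ := by
            rw [Finset.prod_const, hcintra, hr2]
        _ ≤ _ := by
            refine Finset.prod_le_prod (fun _ _ => le_of_lt hδ) (fun p hp => ?_)
            rw [Finset.mem_filter, hOD, Finset.mem_offDiag] at hp
            obtain ⟨⟨_, _, hne⟩, hcl⟩ := hp
            exact (hintra p.2 p.1 (Ne.symm hne) hcl.symm).1
    have hb2 : T ^ (2 * ϱ) ≤
        ∏ p ∈ OD.filter (fun p => ¬ cl p.1 = cl p.2), ‖x p.2 - x p.1‖ := by
      calc T ^ (2 * ϱ)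
          = ∏ _p ∈ OD.filter (fun p => ¬ cl p.1 = cl p.2), T := by
            rw [Finset.prod_const, hcinter]
        _ ≤ _ := by
            refine Finset.prod_le_prod (fun _ _ => le_of_lt hT) (fun p hp => ?_)
            rw [Finset.mem_filter] at hp
            exact (hinter p.2 p.1 (fun h => hp.2 h.symm)).1
    rw [hsplit]
    calc T ^ (2 * ϱ) * δ ^ (n * (n - 1) - 2 * ϱ)
        = δ ^ (n * (n - 1) - 2 * ϱ) * T ^ (2 * ϱ) := by ring
      _ ≤ _ := by
          refine mul_le_mul hb1 hb2 (pow_nonneg (le_of_lt hT) _) ?_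
          refine Finset.prod_nonneg fun p _ => ?_
          exact norm_nonneg _
  -- combine
  have hQnn : 0 ≤ Q := Finset.prod_nonneg fun p _ => norm_nonneg _
  have hPnn : 0 ≤ P := Finset.prod_nonneg fun p _ => norm_nonneg _
  have hαnn : 0 ≤ ∏ j, ‖α j‖ :=
    Finset.prod_nonneg fun j _ => norm_nonneg _
  calc mA ^ n * ρ * (δ - ρ) ^ (L - 1) * (T - ρ) ^ (n - L) *
        T ^ (2 * ϱ) * δ ^ (n * (n - 1) - 2 * ϱ)
      = (mA ^ n * (ρ * (δ - ρ) ^ (L - 1) * (T - ρ) ^ (n - L))) *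
          (T ^ (2 * ϱ) * δ ^ (n * (n - 1) - 2 * ϱ)) := by ring
    _ ≤ ((∏ j, ‖α j‖) * P) * Q ^ 2 := by
        have hnn3 : (0:ℝ) ≤ ρ * (δ - ρ) ^ (L - 1) * (T - ρ) ^ (n - L) :=
          mul_nonneg (mul_nonneg (le_of_lt hρ0) (pow_nonneg (by linarith) _))
            (pow_nonneg (by linarith) _)
        refine mul_le_mul (mul_le_mul h1 h2 hnn3 ?_) h3
          (mul_nonneg (pow_nonneg (le_of_lt hT) _) (pow_nonneg (le_of_lt hδ) _))
          (mul_nonneg hαnn hPnn)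
        exact le_trans (pow_nonneg (le_of_lt hmA) _) h1
    _ = (∏ j, ‖α j‖) * Q * (P * Q) := by ring
end
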